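/- For |X| = n, the diameter Δ of RP(X) under the metric d_HP satisfies (n−1)(n−2)/2 + 1 ≤ Δ ≤ (n−1)(n−2). In particular, for a caterpillar tree C whose inclusion-maximal proper cluster is X \ {a}, and a tree T whose only proper cluster is {a, b} for some b ≠ a, the distance is d_HP(C, T) = (n−1)(n−2)/2 + 1. -/

import Mathlib

open Finset

variable {X : Type*} [DecidableEq X] [Fintype X]

/-- A hierarchy on a finite set `X`: a collection of subsets of `X` containing `X`
and all singletons, whose members are nonempty and pairwise disjoint or nested. -/
def IsHierarchy (H : Finset (Finset X)) : Prop :=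
  (Finset.univ ∈ H) ∧ (∀ x : X, {x} ∈ H) ∧ (∀ A ∈ H, A.Nonempty) ∧
    ∀ A ∈ H, ∀ B ∈ H, A ∩ B = ∅ ∨ A ⊆ B ∨ B ⊆ A

/-- A hierarchy-preserving map from `H` to `H'`: fixes singletons, is enveloping and
subset-preserving. -/
def IsHPMap (H H' : Finset (Finset X)) (δ : Finset X → Finset X) : Prop :=
  (∀ A ∈ H, δ A ∈ H') ∧ (∀ x : X, δ {x} = {x}) ∧
    (∀ A ∈ H, A ⊆ δ A) ∧ ∀ A ∈ H, ∀ B ∈ H, A ⊂ B → δ A ⊂ δ B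

/-- `T ≤_HP T'`: there exists a hierarchy-preserving map from `H(T)` to `H(T')`. -/
def LeHP (H H' : Finset (Finset X)) : Prop :=
  ∃ δ : Finset X → Finset X, IsHPMap H H' δ

/-- `A` is an inclusion-maximal (proper) subcluster of `D` in `H`. -/
def IsMaxSub (H : Finset (Finset X)) (A D : Finset X) : Prop :=
  A ∈ H ∧ D ∈ H ∧ A ⊂ D ∧ ∀ C ∈ H, ¬(A ⊂ C ∧ C ⊂ D)

/-- The binding of `H` at `A ∪ B`: delete the non-singleton members of `{A, B}` and
add `A ∪ B`. -/
def binding (H : Finset (Finset X)) (A B : Finset X) : Finset (Finset X) :=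
  (H.filter fun C => ¬((C = A ∨ C = B) ∧ 1 < C.card)) ∪ {A ∪ B}

/-- The proper clusters of a hierarchy: members that are neither `X` nor singletons. -/
def properClusters (H : Finset (Finset X)) : Finset (Finset X) :=
  H.filter fun A => A ≠ Finset.univ ∧ 1 < A.card

/-- The rank of a tree/hierarchy: `f(T) = ∑_{A ∈ P(T)} (|A| - 1)`. -/
def rankHP (H : Finset (Finset X)) : ℕ :=
  ∑ A ∈ properClusters H, (A.card - 1)

/-- `T'` covers `T` in the partial order `≤_HP`. -/
def CoversHP (H H' : Finset (Finset X)) : Prop :=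
  LeHP H H' ∧ H ≠ H' ∧
    ∀ H'' : Finset (Finset X), IsHierarchy H'' → LeHP H H'' → LeHP H'' H' → H'' = H ∨ H'' = H'

/-- Adjacency in the Hasse diagram of `≤_HP` on hierarchies. -/
def HasseAdj (H H' : Finset (Finset X)) : Prop :=
  IsHierarchy H ∧ IsHierarchy H' ∧ (CoversHP H H' ∨ CoversHP H' H)

/-- There is a walk of length `n` between `H` and `H'` in the Hasse diagram. -/
def HasPathHP (H H' : Finset (Finset X)) (n : ℕ) : Prop :=
  ∃ c : ℕ → Finset (Finset X), c 0 = H ∧ c n = H' ∧ ∀ i < n, HasseAdj (c i) (c (i + 1))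

/-- `d` is the geodesic distance between `H` and `H'` in the Hasse diagram of `≤_HP`. -/
def DistHP (H H' : Finset (Finset X)) (d : ℕ) : Prop :=
  HasPathHP H H' d ∧ ∀ m : ℕ, HasPathHP H H' m → d ≤ m

/-- A caterpillar tree: its proper clusters form a strictly increasing chain
`C₂ ⊂ C₃ ⊂ ⋯ ⊂ C_{n-1}` with `|C_k| = k`. -/
def IsCaterpillar (H : Finset (Finset X)) : Prop :=
  IsHierarchy H ∧ ∃ C : ℕ → Finset X,
    (∀ k, 2 ≤ k → k ≤ Fintype.card X - 1 → (C k).card = k) ∧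
    (∀ k l, 2 ≤ k → k < l → l ≤ Fintype.card X - 1 → C k ⊂ C l) ∧
    properClusters H = (Finset.Icc 2 (Fintype.card X - 1)).image C

section Basics
set_option linter.unusedSectionVars false
set_option linter.unusedVariables false

variable {X : Type*} [DecidableEq X] [Fintype X]
variable {H H' H'' K : Finset (Finset X)} {δ : Finset X → Finset X}
variable {A B D E U : Finset X}

theorem LeHP.of_subset (h : H ⊆ H') : LeHP H H' :=
  ⟨id, fun A hA => h hA, fun _ => rfl, fun _ _ => subset_rfl, fun _ _ _ _ h => h⟩

theorem LeHP.refl (H : Finset (Finset X)) : LeHP H H := LeHP.of_subset (subset_rfl)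

theorem LeHP.trans (h1 : LeHP H H') (h2 : LeHP H' H'') : LeHP H H'' := by
  obtain ⟨d1, m1, s1, e1, mo1⟩ := h1
  obtain ⟨d2, m2, s2, e2, mo2⟩ := h2
  exact ⟨d2 ∘ d1, fun A hA => m2 _ (m1 A hA),
    fun x => by simp [s1 x, s2 x],
    fun A hA => (e1 A hA).trans (e2 _ (m1 A hA)),
    fun A hA B hB hlt => mo2 _ (m1 A hA) _ (m1 B hB) (mo1 A hA B hB hlt)⟩

theorem hpmap_univ (hm : IsHPMap H H' δ) (hu : Finset.univ ∈ H) :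
    δ Finset.univ = Finset.univ :=
  Finset.univ_subset_iff.mp (hm.2.2.1 Finset.univ hu)

theorem mem_properClusters : A ∈ properClusters H ↔ A ∈ H ∧ A ≠ Finset.univ ∧ 1 < A.card := by
  simp [properClusters]

theorem IsHierarchy.mem_break (hH : IsHierarchy H) (hA : A ∈ H) :
    A = Finset.univ ∨ (∃ x, A = {x}) ∨ A ∈ properClusters H := by
  rcases eq_or_ne A Finset.univ with h | h
  · exact Or.inl h
  have hne := hH.2.2.1 A hA
  rcases Nat.lt_or_ge A.card 2 with hc | hc
  · exact Or.inr (Or.inl (Finset.card_eq_one.mp (le_antisymm (by omega) hne.card_pos)))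
  · exact Or.inr (Or.inr (mem_properClusters.mpr ⟨hA, h, hc⟩))

theorem IsHierarchy.eq_of_proper_eq (hH : IsHierarchy H) (hH' : IsHierarchy H')
    (h : properClusters H = properClusters H') : H = H' := by
  ext A
  constructor
  · intro hA
    rcases hH.mem_break hA with rfl | ⟨x, rfl⟩ | hp
    · exact hH'.1
    · exact hH'.2.1 x
    · exact (mem_properClusters.mp (h ▸ hp)).1
  · intro hA
    rcases hH'.mem_break hA with rfl | ⟨x, rfl⟩ | hp
    · exact hH.1
    · exact hH.2.1 x
    · exact (mem_properClusters.mp (h.symm ▸ hp)).1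

end Basics
section RankLemmas
set_option linter.unusedSectionVars false
set_option linter.unusedVariables false
set_option maxHeartbeats 1000000

variable {X : Type*} [DecidableEq X] [Fintype X]
variable {H H' H'' K : Finset (Finset X)} {δ : Finset X → Finset X}
variable {A B D E U : Finset X}

theorem hpmap_proper (hm : IsHPMap H H' δ) (hu : Finset.univ ∈ H)
    (hA : A ∈ properClusters H) : δ A ∈ properClusters H' := by
  obtain ⟨hAH, hAne, hAc⟩ := mem_properClusters.mp hA
  have h1 : A ⊂ Finset.univ := Finset.ssubset_univ_iff.mpr hAne
  have h2 : δ A ⊂ δ Finset.univ := hm.2.2.2 A hAH Finset.univ hu h1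
  rw [hpmap_univ hm hu] at h2
  exact mem_properClusters.mpr ⟨hm.1 A hAH, Finset.ssubset_univ_iff.mp h2,
    lt_of_lt_of_le hAc (Finset.card_le_card (hm.2.2.1 A hAH))⟩

theorem hpmap_fiber_disj (hm : IsHPMap H H' δ) (hH : IsHierarchy H)
    (hA : A ∈ H) (hB : B ∈ H) (hd : δ A = δ B) (hne : A ≠ B) : A ∩ B = ∅ := by
  rcases hH.2.2.2 A hA B hB with h | h | h
  · exact h
  · exact absurd hd (hm.2.2.2 A hA B hB (ssubset_of_subset_of_ne h hne)).ne
  · exact absurd hd.symm (hm.2.2.2 B hB A hA (ssubset_of_subset_of_ne h hne.symm)).ne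

/-- Sum of (card - 1) over pairwise disjoint nonempty subsets of D. -/
theorem sum_card_sub_one_le (S : Finset (Finset X)) (D : Finset X)
    (hsub : ∀ A ∈ S, A ⊆ D) (hne : ∀ A ∈ S, A.Nonempty)
    (hdisj : ∀ A ∈ S, ∀ B ∈ S, A ≠ B → A ∩ B = ∅) (hD : D.Nonempty) :
    (∑ A ∈ S, (A.card - 1)) + S.card = (S.biUnion id).card ∧
      (S.biUnion id).card ≤ D.card ∧ ∑ A ∈ S, (A.card - 1) ≤ D.card - 1 := by
  have hdisj' : ∀ A ∈ S, ∀ B ∈ S, A ≠ B → Disjoint (id A) (id B) := by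
    intro A hA B hB hAB
    simpa [Finset.disjoint_iff_inter_eq_empty] using hdisj A hA B hB hAB
  have h1 : (∑ A ∈ S, (A.card - 1)) + S.card = ∑ A ∈ S, A.card := by
    have : ∑ A ∈ S, A.card = ∑ A ∈ S, ((A.card - 1) + 1) := by
      refine Finset.sum_congr rfl fun A hA => ?_
      have := (hne A hA).card_pos
      omega
    rw [this, Finset.sum_add_distrib, Finset.sum_const, smul_eq_mul, mul_one]
  have h2 : ∑ A ∈ S, A.card = (S.biUnion id).card := (Finset.card_biUnion hdisj').symm
  have h3 : (S.biUnion id).card ≤ D.card := by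
    refine Finset.card_le_card ?_
    intro x hx
    obtain ⟨A, hA, hxA⟩ := Finset.mem_biUnion.mp hx
    exact hsub A hA hxA
  refine ⟨h1.trans h2, h3, ?_⟩
  rcases S.eq_empty_or_nonempty with rfl | hS
  · simp
  · have := hS.card_pos
    omega

theorem sum_card_le (S : Finset (Finset X)) (D : Finset X)
    (hsub : ∀ A ∈ S, A ⊆ D) (hne : ∀ A ∈ S, A.Nonempty)
    (hdisj : ∀ A ∈ S, ∀ B ∈ S, A ≠ B → A ∩ B = ∅) (hD : D.Nonempty) :
    ∑ A ∈ S, (A.card - 1) ≤ D.card - 1 :=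
  (sum_card_sub_one_le S D hsub hne hdisj hD).2.2

/-- Rigidity: equality forces the fiber to be {D}. -/
theorem sum_card_rigid (S : Finset (Finset X)) (D : Finset X)
    (hsub : ∀ A ∈ S, A ⊆ D) (hne : ∀ A ∈ S, A.Nonempty)
    (hdisj : ∀ A ∈ S, ∀ B ∈ S, A ≠ B → A ∩ B = ∅) (hD : 2 ≤ D.card)
    (heq : ∑ A ∈ S, (A.card - 1) = D.card - 1) : S = {D} := by
  obtain ⟨h1, h2, _⟩ := sum_card_sub_one_le S D hsub hne hdisj (Finset.card_pos.mp (by omega))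
  have hSne : S.Nonempty := by
    rcases S.eq_empty_or_nonempty with rfl | h
    · simp at heq; omega
    · exact h
  have hScard : S.card = 1 := by have := hSne.card_pos; omega
  obtain ⟨A, rfl⟩ := Finset.card_eq_one.mp hScard
  have hA : A ∈ ({A} : Finset (Finset X)) := Finset.mem_singleton_self A
  have hAc : A.card - 1 = D.card - 1 := by simpa using heq
  have : A.card = D.card := by
    have := (hne A hA).card_pos
    omega
  rw [Finset.eq_of_subset_of_card_le (hsub A hA) (le_of_eq this.symm)]

end RankLemmas
section RankOrder
set_option linter.unusedSectionVars false
set_option linter.unusedVariables false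
set_option maxHeartbeats 1000000

variable {X : Type*} [DecidableEq X] [Fintype X]
variable {H H' H'' K : Finset (Finset X)} {δ : Finset X → Finset X}
variable {A B D E U : Finset X}

theorem properClusters_subset : properClusters H ⊆ H := Finset.filter_subset _ _

theorem card_pos_of_proper (hA : A ∈ properClusters H) : A.Nonempty := by
  have := (mem_properClusters.mp hA).2.2
  exact Finset.card_pos.mp (by omega)

theorem rank_le_and_rigid (hH : IsHierarchy H) (hH' : IsHierarchy H')
    (hm : IsHPMap H H' δ) :
    rankHP H ≤ rankHP H' ∧ (rankHP H' ≤ rankHP H → H = H') := by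
  have hmaps : ∀ A ∈ properClusters H, δ A ∈ properClusters H' :=
    fun A hA => hpmap_proper hm hH.1 hA
  have hfibprops : ∀ D ∈ properClusters H',
      (∀ A ∈ (properClusters H).filter (fun A => δ A = D), A ⊆ D) ∧
      (∀ A ∈ (properClusters H).filter (fun A => δ A = D), A.Nonempty) ∧
      (∀ A ∈ (properClusters H).filter (fun A => δ A = D),
        ∀ B ∈ (properClusters H).filter (fun A => δ A = D), A ≠ B → A ∩ B = ∅) := by
    intro D hD
    refine ⟨fun A hA => ?_, fun A hA => ?_, fun A hA B hB hne => ?_⟩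
    · obtain ⟨hA1, hA2⟩ := Finset.mem_filter.mp hA
      exact hA2 ▸ hm.2.2.1 A (properClusters_subset hA1)
    · exact card_pos_of_proper (Finset.mem_filter.mp hA).1
    · obtain ⟨hA1, hA2⟩ := Finset.mem_filter.mp hA
      obtain ⟨hB1, hB2⟩ := Finset.mem_filter.mp hB
      exact hpmap_fiber_disj hm hH (properClusters_subset hA1) (properClusters_subset hB1)
        (hA2.trans hB2.symm) hne
  have hfib : ∀ D ∈ properClusters H',
      ∑ A ∈ (properClusters H).filter (fun A => δ A = D), (A.card - 1) ≤ D.card - 1 := by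
    intro D hD
    obtain ⟨p1, p2, p3⟩ := hfibprops D hD
    exact sum_card_le _ D p1 p2 p3 (card_pos_of_proper hD)
  have hsplit : ∑ D ∈ properClusters H',
      ∑ A ∈ (properClusters H).filter (fun A => δ A = D), (A.card - 1) = rankHP H :=
    Finset.sum_fiberwise_of_maps_to hmaps _
  have hle : rankHP H ≤ rankHP H' := by
    rw [← hsplit]
    exact Finset.sum_le_sum hfib
  refine ⟨hle, fun hge => ?_⟩
  have hsum_eq : ∑ D ∈ properClusters H',
      ∑ A ∈ (properClusters H).filter (fun A => δ A = D), (A.card - 1) =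
      ∑ D ∈ properClusters H', (D.card - 1) := by
    rw [hsplit]
    show rankHP H = rankHP H'
    exact le_antisymm hle hge
  have heach := (Finset.sum_eq_sum_iff_of_le hfib).mp hsum_eq
  have hPsub : ∀ D ∈ properClusters H', D ∈ properClusters H ∧ δ D = D := by
    intro D hD
    obtain ⟨p1, p2, p3⟩ := hfibprops D hD
    have hDc := (mem_properClusters.mp hD).2.2
    have := sum_card_rigid _ D p1 p2 p3 (by omega) (heach D hD)
    have hDin : D ∈ (properClusters H).filter (fun A => δ A = D) := by
      rw [this]; exact Finset.mem_singleton_self D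
    obtain ⟨q1, q2⟩ := Finset.mem_filter.mp hDin
    exact ⟨q1, q2⟩
  refine hH.eq_of_proper_eq hH' (Finset.Subset.antisymm ?_ ?_)
  · intro A hA
    have hdA := hmaps A hA
    obtain ⟨h1, h2⟩ := hPsub (δ A) hdA
    have hrig := sum_card_rigid _ (δ A) (hfibprops _ hdA).1 (hfibprops _ hdA).2.1
      (hfibprops _ hdA).2.2 (by have := (mem_properClusters.mp hdA).2.2; omega)
      (heach _ hdA)
    have hAin : A ∈ (properClusters H).filter (fun B => δ B = δ A) :=
      Finset.mem_filter.mpr ⟨hA, rfl⟩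
    rw [hrig, Finset.mem_singleton] at hAin
    exact hAin ▸ hdA
  · exact fun D hD => (hPsub D hD).1

theorem rank_le_of_le (hH : IsHierarchy H) (hH' : IsHierarchy H') (h : LeHP H H') :
    rankHP H ≤ rankHP H' := by
  obtain ⟨δ, hm⟩ := h
  exact (rank_le_and_rigid hH hH' hm).1

theorem eq_of_le_of_rank_le (hH : IsHierarchy H) (hH' : IsHierarchy H') (h : LeHP H H')
    (hr : rankHP H' ≤ rankHP H) : H = H' := by
  obtain ⟨δ, hm⟩ := h
  exact (rank_le_and_rigid hH hH' hm).2 hr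

theorem rank_lt_of_lt (hH : IsHierarchy H) (hH' : IsHierarchy H') (h : LeHP H H')
    (hne : H ≠ H') : rankHP H < rankHP H' := by
  rcases Nat.lt_or_ge (rankHP H) (rankHP H') with h1 | h1
  · exact h1
  · exact absurd (eq_of_le_of_rank_le hH hH' h h1) hne

theorem covers_of_rank_succ (hH : IsHierarchy H) (hH' : IsHierarchy H') (h : LeHP H H')
    (hr : rankHP H' = rankHP H + 1) : CoversHP H H' := by
  refine ⟨h, fun he => by simp [he] at hr, fun K hK h1 h2 => ?_⟩
  have r1 := rank_le_of_le hH hK h1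
  have r2 := rank_le_of_le hK hH' h2
  rcases Nat.lt_or_ge (rankHP K) (rankHP H') with hc | hc
  · exact Or.inl ((eq_of_le_of_rank_le hH hK h1 (by omega)).symm)
  · exact Or.inr (eq_of_le_of_rank_le hK hH' h2 (by omega))

theorem hasse_of_rank_succ (hH : IsHierarchy H) (hH' : IsHierarchy H') (h : LeHP H H')
    (hr : rankHP H' = rankHP H + 1) : HasseAdj H H' :=
  ⟨hH, hH', Or.inl (covers_of_rank_succ hH hH' h hr)⟩

end RankOrder
section Paths
set_option linter.unusedSectionVars false
set_option linter.unusedVariables false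
set_option maxHeartbeats 1000000

variable {X : Type*} [DecidableEq X] [Fintype X]
variable {H H' H'' K : Finset (Finset X)}

theorem HasseAdj.symm (h : HasseAdj H H') : HasseAdj H' H :=
  ⟨h.2.1, h.1, h.2.2.symm⟩

theorem hasPath_zero (H : Finset (Finset X)) : HasPathHP H H 0 :=
  ⟨fun _ => H, rfl, rfl, by omega⟩

theorem hasPath_prepend (h : HasseAdj H H') {m : ℕ} (hp : HasPathHP H' K m) :
    HasPathHP H K (m + 1) := by
  obtain ⟨c, hc0, hcm, hce⟩ := hp
  refine ⟨fun i => Nat.casesOn i H c, rfl, hcm, ?_⟩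
  intro i hi
  match i with
  | 0 => simpa [hc0] using h
  | (j + 1) => exact hce j (by omega)

theorem hasPath_single (h : HasseAdj H H') : HasPathHP H H' 1 :=
  hasPath_prepend h (hasPath_zero H')

theorem hasPath_concat {m k : ℕ} (h1 : HasPathHP H H' m) (h2 : HasPathHP H' K k) :
    HasPathHP H K (m + k) := by
  obtain ⟨c1, hc10, hc1m, hc1e⟩ := h1
  obtain ⟨c2, hc20, hc2k, hc2e⟩ := h2
  refine ⟨fun i => if i < m then c1 i else c2 (i - m), ?_, ?_, ?_⟩
  · rcases Nat.eq_zero_or_pos m with rfl | hm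
    · simpa using (hc20.trans (hc1m.symm.trans hc10))
    · simpa [hm] using hc10
  · have : ¬ (m + k < m) := by omega
    simpa [this] using (by simpa using hc2k : c2 (m + k - m) = K)
  · intro i hi
    rcases Nat.lt_or_ge (i + 1) m with h | h
    · have hi' : i < m := by omega
      simpa [hi', h] using hc1e i hi'
    · rcases Nat.lt_or_ge i m with h' | h'
      · have him : i + 1 = m := by omega
        have : ¬ (i + 1 < m) := by omega
        have e1 : c2 (i + 1 - m) = c1 (i + 1) := by
          rw [him]; simpa using (hc20.trans (hc1m.symm))
        simp only [h', if_pos, this, if_neg, not_false_iff, e1]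
        exact (by simpa [him] using hc1e i (by omega))
      · have n1 : ¬ (i < m) := by omega
        have n2 : ¬ (i + 1 < m) := by omega
        have e : i + 1 - m = (i - m) + 1 := by omega
        simp only [n1, n2, if_neg, not_false_iff, e]
        exact hc2e (i - m) (by omega)

theorem hasPath_symm {m : ℕ} (h : HasPathHP H H' m) : HasPathHP H' H m := by
  obtain ⟨c, hc0, hcm, hce⟩ := h
  refine ⟨fun i => c (m - i), by simpa using hcm, by simpa using hc0, ?_⟩
  intro i hi
  have e : m - i = (m - (i + 1)) + 1 := by omega
  show HasseAdj (c (m - i)) (c (m - (i + 1)))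
  rw [e]
  exact (hce (m - (i + 1)) (by omega)).symm

end Paths
theorem fs_exists_minimal {α : Type*} [Preorder α] (s : Finset α) (h : s.Nonempty) :
    ∃ m ∈ s, ∀ x ∈ s, ¬x < m := by
  obtain ⟨m, hm⟩ := s.exists_minimal h
  exact ⟨m, hm.1, fun x hx hlt => hlt.not_ge (hm.2 hx hlt.le)⟩
theorem fs_exists_maximal {α : Type*} [Preorder α] (s : Finset α) (h : s.Nonempty) :
    ∃ m ∈ s, ∀ x ∈ s, ¬m < x := by
  obtain ⟨m, hm⟩ := s.exists_maximal h
  exact ⟨m, hm.1, fun x hx hlt => hlt.not_ge (hm.2 hx hlt.le)⟩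
section Star
set_option linter.unusedSectionVars false
set_option linter.unusedVariables false
set_option maxHeartbeats 1000000

variable {X : Type*} [DecidableEq X] [Fintype X]
variable {H H' H'' K : Finset (Finset X)}
variable {A B D E U : Finset X}

/-- The star hierarchy: only the universe and singletons. -/
def starH (X : Type*) [DecidableEq X] [Fintype X] : Finset (Finset X) :=
  insert Finset.univ (Finset.univ.image fun x : X => ({x} : Finset X))

theorem mem_starH : A ∈ starH X ↔ A = Finset.univ ∨ ∃ x, A = {x} := by
  simp [starH, eq_comm]

theorem starH_hier [Nonempty X] : IsHierarchy (starH X) := by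
  refine ⟨by simp [starH], fun x => by simp [mem_starH], ?_, ?_⟩
  · intro A hA
    rcases mem_starH.mp hA with rfl | ⟨x, rfl⟩
    · exact Finset.univ_nonempty
    · simp
  · intro A hA B hB
    rcases mem_starH.mp hA with rfl | ⟨x, rfl⟩
    · exact Or.inr (Or.inr (Finset.subset_univ B))
    rcases mem_starH.mp hB with rfl | ⟨y, rfl⟩
    · exact Or.inr (Or.inl (Finset.subset_univ _))
    rcases eq_or_ne x y with rfl | h
    · exact Or.inr (Or.inl subset_rfl)
    · exact Or.inl (by simp [Finset.singleton_inter_of_notMem, h])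

theorem properClusters_starH : properClusters (starH X) = ∅ := by
  ext A
  simp only [mem_properClusters, Finset.notMem_empty, iff_false]
  rintro ⟨hA, hne, hc⟩
  rcases mem_starH.mp hA with rfl | ⟨x, rfl⟩
  · exact hne rfl
  · simp at hc

theorem rankHP_starH : rankHP (starH X) = 0 := by
  simp [rankHP, properClusters_starH]

theorem eq_starH_of_rank_zero (hH : IsHierarchy H) (hr : rankHP H = 0) : H = starH X := by
  have : Nonempty X := by
    obtain ⟨x, _⟩ := hH.2.2.1 _ hH.1
    exact ⟨x⟩
  refine hH.eq_of_proper_eq starH_hier ?_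
  rw [properClusters_starH]
  by_contra h
  obtain ⟨A, hA⟩ := Finset.nonempty_iff_ne_empty.mpr h
  have hc := (mem_properClusters.mp hA).2.2
  have h2 : A.card - 1 ≤ rankHP H :=
    Finset.single_le_sum (f := fun A : Finset X => A.card - 1) (fun _ _ => Nat.zero_le _) hA
  omega

theorem properClusters_erase : properClusters (H.erase A) = (properClusters H).erase A := by
  ext B
  simp only [mem_properClusters, Finset.mem_erase]
  tauto

theorem properClusters_insert_of_proper (h1 : A ≠ Finset.univ) (h2 : 1 < A.card) :
    properClusters (insert A H) = insert A (properClusters H) := by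
  ext B
  simp only [mem_properClusters, Finset.mem_insert]
  constructor
  · rintro ⟨rfl | hB, h3, h4⟩
    · exact Or.inl rfl
    · exact Or.inr ⟨hB, h3, h4⟩
  · rintro (rfl | ⟨hB, h3, h4⟩)
    · exact ⟨Or.inl rfl, h1, h2⟩
    · exact ⟨Or.inr hB, h3, h4⟩

theorem rank_erase (hA : A ∈ properClusters H) :
    rankHP H = rankHP (H.erase A) + (A.card - 1) := by
  rw [rankHP, rankHP, properClusters_erase]
  exact (Finset.sum_erase_add _ _ hA).symm

theorem rank_insert_of_proper (h0 : A ∉ H) (h1 : A ≠ Finset.univ) (h2 : 1 < A.card) :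
    rankHP (insert A H) = rankHP H + (A.card - 1) := by
  rw [rankHP, rankHP, properClusters_insert_of_proper h1 h2,
    Finset.sum_insert (fun hc => h0 (properClusters_subset hc)), Nat.add_comm]

end Star
section Descent
set_option linter.unusedSectionVars false
set_option linter.unusedVariables false
set_option maxHeartbeats 1000000

variable {X : Type*} [DecidableEq X] [Fintype X]
variable {H H' H'' K : Finset (Finset X)}
variable {A B D E U : Finset X}

theorem exists_descent (hH : IsHierarchy H) (hr : 0 < rankHP H) :
    ∃ K : Finset (Finset X), IsHierarchy K ∧ LeHP K H ∧ rankHP H = rankHP K + 1 ∧ K ≠ H := by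
  have hPne : (properClusters H).Nonempty := by
    rcases (properClusters H).eq_empty_or_nonempty with he | h
    · simp [rankHP, he] at hr
    · exact h
  obtain ⟨A, hA, hmin⟩ := fs_exists_minimal _ hPne
  obtain ⟨hAH, hAu, hAc⟩ := mem_properClusters.mp hA
  have hminH : ∀ B ∈ H, B ⊂ A → B.card = 1 := by
    intro B hB hBA
    by_contra hc
    have hBne := (hH.2.2.1 B hB).card_pos
    have hBu : B ≠ Finset.univ := by
      rintro rfl
      exact absurd (lt_of_lt_of_le hBA (Finset.subset_univ A)) (lt_irrefl _)
    exact hmin B (mem_properClusters.mpr ⟨hB, hBu, by omega⟩) hBA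
  rcases Nat.lt_or_ge A.card 3 with hc3 | hc3
  · -- A.card = 2 : remove A
    refine ⟨H.erase A, ⟨?_, ?_, ?_, ?_⟩, LeHP.of_subset (Finset.erase_subset _ _), ?_, ?_⟩
    · exact Finset.mem_erase.mpr ⟨fun h => hAu h.symm, hH.1⟩
    · intro x
      refine Finset.mem_erase.mpr ⟨fun h => by simp [← h] at hAc, hH.2.1 x⟩
    · exact fun B hB => hH.2.2.1 B (Finset.mem_of_mem_erase hB)
    · exact fun B hB C hC => hH.2.2.2 B (Finset.mem_of_mem_erase hB) C (Finset.mem_of_mem_erase hC)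
    · rw [rank_erase hA]; omega
    · intro h
      exact Finset.notMem_erase A H (by rw [h]; exact hAH)
  · -- A.card ≥ 3 : shrink A by one element
    obtain ⟨x, hx⟩ := Finset.card_pos.mp (by omega : 0 < A.card)
    set A' := A.erase x with hA'
    have hA'c : A'.card = A.card - 1 := Finset.card_erase_of_mem hx
    have hA'ss : A' ⊂ A := Finset.erase_ssubset hx
    have hA'H : A' ∉ H := fun h => by have := hminH A' h hA'ss; omega
    have hA'u : A' ≠ Finset.univ := by
      intro h
      exact hAu (Finset.univ_subset_iff.mp (h ▸ hA'ss.subset))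
    refine ⟨insert A' (H.erase A), ⟨?_, ?_, ?_, ?_⟩, ?_, ?_, ?_⟩
    · exact Finset.mem_insert_of_mem (Finset.mem_erase.mpr ⟨fun h => hAu h.symm, hH.1⟩)
    · intro y
      refine Finset.mem_insert_of_mem (Finset.mem_erase.mpr ⟨fun h => by simp [← h] at hAc, hH.2.1 y⟩)
    · intro B hB
      rcases Finset.mem_insert.mp hB with rfl | hB'
      · exact Finset.card_pos.mp (by omega)
      · exact hH.2.2.1 B (Finset.mem_of_mem_erase hB')
    · intro B hB C hC
      have key : ∀ F ∈ H.erase A, F ∩ A' = ∅ ∨ F ⊆ A' ∨ A' ⊆ F := by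
        intro F hF
        have hFH := Finset.mem_of_mem_erase hF
        have hFA := (Finset.mem_erase.mp hF).1
        rcases hH.2.2.2 F hFH A hAH with h | h | h
        · refine Or.inl (Finset.subset_empty.mp ?_)
          rw [← h]
          exact Finset.inter_subset_inter subset_rfl hA'ss.subset
        · have hFc := hminH F hFH (ssubset_of_subset_of_ne h hFA)
          obtain ⟨y, rfl⟩ := Finset.card_eq_one.mp hFc
          have hy : y ∈ A := h (Finset.mem_singleton_self y)
          rcases eq_or_ne y x with rfl | hyx
          · exact Or.inl (by simp [hA'])
          · exact Or.inr (Or.inl (by simp [hA', Finset.mem_erase, hyx, hy]))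
        · exact Or.inr (Or.inr (hA'ss.subset.trans h))
      rcases Finset.mem_insert.mp hB with rfl | hB'
      · rcases Finset.mem_insert.mp hC with rfl | hC'
        · exact Or.inr (Or.inl subset_rfl)
        · rcases key C hC' with h | h | h
          · exact Or.inl (by rwa [Finset.inter_comm] at h)
          · exact Or.inr (Or.inr h)
          · exact Or.inr (Or.inl h)
      · rcases Finset.mem_insert.mp hC with rfl | hC'
        · exact key B hB'
        · exact hH.2.2.2 B (Finset.mem_of_mem_erase hB') C (Finset.mem_of_mem_erase hC')
    · -- LeHP
      refine ⟨fun S => if S = A' then A else S, ?_, ?_, ?_, ?_⟩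
      · intro S hS
        show (if S = A' then A else S) ∈ H
        rcases Finset.mem_insert.mp hS with rfl | hS'
        · simp only [if_pos rfl]; exact hAH
        · rw [if_neg (fun h : S = A' => hA'H (by rw [← h]; exact Finset.mem_of_mem_erase hS'))]
          exact Finset.mem_of_mem_erase hS'
      · intro y
        show (if ({y} : Finset X) = A' then A else {y}) = {y}
        rw [if_neg (fun h => by rw [← h] at hA'c; simp at hA'c; omega)]
      · intro S hS
        show S ⊆ if S = A' then A else S
        rcases eq_or_ne S A' with rfl | h
        · rw [if_pos rfl]; exact hA'ss.subset
        · rw [if_neg h]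
      · intro S hS T hT hST
        show (if S = A' then A else S) ⊂ (if T = A' then A else T)
        rcases eq_or_ne S A' with rfl | hS'
        · rcases eq_or_ne T A' with rfl | hT'
          · exact absurd hST (ssubset_irrefl _)
          · rw [if_pos rfl, if_neg hT']
            have hTH : T ∈ H := by
              rcases Finset.mem_insert.mp hT with rfl | h
              · exact absurd rfl hT'
              · exact Finset.mem_of_mem_erase h
            have hTA : T ≠ A := by
              rcases Finset.mem_insert.mp hT with rfl | h
              · exact absurd rfl hT'
              · exact (Finset.mem_erase.mp h).1
            rcases hH.2.2.2 T hTH A hAH with h | h | h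
            · exfalso
              have hA'ne : A'.Nonempty := Finset.card_pos.mp (by omega)
              obtain ⟨y, hy⟩ := hA'ne
              have hmem : y ∈ T ∩ A := Finset.mem_inter.mpr ⟨hST.subset hy, hA'ss.subset hy⟩
              rw [h] at hmem
              exact absurd hmem (Finset.notMem_empty y)
            · have := hminH T hTH (ssubset_of_subset_of_ne h hTA)
              have h2 : A'.card < T.card := Finset.card_lt_card hST
              omega
            · exact ssubset_of_subset_of_ne h (fun hh => hTA hh.symm)
        · rcases eq_or_ne T A' with rfl | hT'
          · rw [if_neg hS', if_pos rfl]
            exact hST.trans hA'ss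
          · rw [if_neg hS', if_neg hT']
            exact hST
    · rw [rank_erase hA, rank_insert_of_proper (fun h => hA'H (Finset.mem_of_mem_erase h)) hA'u (by omega)]
      omega
    · intro h
      exact hA'H (h ▸ Finset.mem_insert_self A' _)

end Descent

section PathStar
set_option linter.unusedSectionVars false
set_option maxHeartbeats 1000000

variable {X : Type*} [DecidableEq X] [Fintype X]

theorem path_to_star_aux (r : ℕ) : ∀ H : Finset (Finset X), IsHierarchy H → rankHP H = r →
    HasPathHP H (starH X) r := by
  induction r using Nat.strong_induction_on with
  | _ r ih =>
    intro H hH hr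
    rcases Nat.eq_zero_or_pos r with rfl | hpos
    · rw [eq_starH_of_rank_zero hH hr]
      exact hasPath_zero _
    · obtain ⟨K, hK, hle, hrk, hne⟩ := exists_descent hH (by omega)
      have hedge : HasseAdj K H := hasse_of_rank_succ hK hH hle (by omega)
      have hpath : HasPathHP K (starH X) (r - 1) :=
        ih (r - 1) (by omega) K hK (by omega)
      have := hasPath_prepend hedge.symm hpath
      have he : r - 1 + 1 = r := by omega
      rwa [he] at this

theorem path_to_star (H : Finset (Finset X)) (hH : IsHierarchy H) :
    HasPathHP H (starH X) (rankHP H) :=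
  path_to_star_aux (rankHP H) H hH rfl

end PathStar
section Laminar
set_option linter.unusedSectionVars false
set_option linter.unusedVariables false
set_option maxHeartbeats 2000000

/-- triangle number -/
def tri (k : ℕ) : ℕ := k * (k - 1) / 2

theorem two_tri (k : ℕ) : 2 * tri k = k * (k - 1) := by
  have h : 2 ∣ k * (k - 1) := by
    rcases k with _ | m
    · simp
    · simpa [Nat.mul_comm] using (Nat.even_mul_succ_self m).two_dvd
  exact Nat.mul_div_cancel' h

theorem tri_mono {a b : ℕ} (h : a ≤ b) : tri a ≤ tri b :=
  Nat.div_le_div_right (Nat.mul_le_mul h (by omega))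

theorem tri_succ_eq (k : ℕ) (hk : 1 ≤ k) : tri k = (k - 1) + tri (k - 1) := by
  have h1 := two_tri k
  have h2 := two_tri (k - 1)
  have h3 : k * (k - 1) = (k - 1) * (k - 1 - 1) + 2 * (k - 1) := by
    rcases k with _ | m
    · simp
    · rcases m with _ | l
      · simp
      · simp only [Nat.add_sub_cancel]
        ring
  omega

theorem tri_pair {a b : ℕ} (ha : 1 ≤ a) (hb : 1 ≤ b) : tri a + tri b ≤ tri (a + b - 1) := by
  obtain ⟨a', rfl⟩ : ∃ a', a = a' + 1 := ⟨a - 1, by omega⟩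
  obtain ⟨b', rfl⟩ : ∃ b', b = b' + 1 := ⟨b - 1, by omega⟩
  have e1 : a' + 1 + (b' + 1) - 1 = a' + b' + 1 := by omega
  rw [e1]
  have h1 := two_tri (a' + 1)
  have h2 := two_tri (b' + 1)
  have h3 := two_tri (a' + b' + 1)
  simp only [Nat.add_sub_cancel] at h1 h2 h3
  have key : (a' + 1) * a' + (b' + 1) * b' ≤ (a' + b' + 1) * (a' + b') := by nlinarith
  omega

theorem tri_fold {ι : Type*} [DecidableEq ι] (s : Finset ι) (m : ι → ℕ) (hs : s.Nonempty)
    (hm : ∀ i ∈ s, 1 ≤ m i) :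
    ∑ i ∈ s, tri (m i) ≤ tri ((∑ i ∈ s, m i) - (s.card - 1)) := by
  induction s using Finset.cons_induction with
  | empty => exact absurd hs (by simp)
  | cons a s ha ih =>
    rcases s.eq_empty_or_nonempty with rfl | hs'
    · simp
    · have hm' : ∀ i ∈ s, 1 ≤ m i := fun i hi => hm i (Finset.mem_cons_of_mem hi)
      have hsum : s.card ≤ ∑ i ∈ s, m i := by
        calc s.card = ∑ i ∈ s, 1 := by simp
        _ ≤ ∑ i ∈ s, m i := Finset.sum_le_sum hm'
      have ih' := ih hs' hm'
      rw [Finset.sum_cons, Finset.sum_cons, Finset.card_cons]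
      have hb : 1 ≤ (∑ i ∈ s, m i) - (s.card - 1) := by
        have := hs'.card_pos
        omega
      have hma : 1 ≤ m a := hm a (Finset.mem_cons_self a s)
      calc tri (m a) + ∑ i ∈ s, tri (m i) ≤ tri (m a) + tri ((∑ i ∈ s, m i) - (s.card - 1)) :=
            Nat.add_le_add_left ih' _
        _ ≤ tri (m a + ((∑ i ∈ s, m i) - (s.card - 1)) - 1) := tri_pair hma hb
        _ = tri (m a + ∑ i ∈ s, m i - (s.card + 1 - 1)) := by
            congr 1
            have := hs'.card_pos
            omega

variable {X : Type*} [DecidableEq X] [Fintype X]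

theorem laminar_bound (N : ℕ) : ∀ (D : Finset X), D.card ≤ N → ∀ F : Finset (Finset X),
    (∀ A ∈ F, A ⊆ D ∧ 2 ≤ A.card) →
    (∀ A ∈ F, ∀ B ∈ F, A ∩ B = ∅ ∨ A ⊆ B ∨ B ⊆ A) →
    ((∀ A ∈ F, A ≠ D) → (∑ A ∈ F, (A.card - 1)) ≤ tri (D.card - 1)) ∧
    (∑ A ∈ F, (A.card - 1)) ≤ tri D.card := by
  induction N with
  | zero =>
    intro D hD F hF hlam
    have : F = ∅ := by
      rw [Finset.eq_empty_iff_forall_notMem]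
      intro A hA
      have h1 := (hF A hA).1
      have h2 := (hF A hA).2
      have := Finset.card_le_card h1
      omega
    simp [this]
  | succ N ih =>
    intro D hD
    suffices key : ∀ F : Finset (Finset X),
        (∀ A ∈ F, A ⊆ D ∧ 2 ≤ A.card) →
        (∀ A ∈ F, ∀ B ∈ F, A ∩ B = ∅ ∨ A ⊆ B ∨ B ⊆ A) →
        (∀ A ∈ F, A ≠ D) → (∑ A ∈ F, (A.card - 1)) ≤ tri (D.card - 1) by
      intro F hF hlam
      refine ⟨key F hF hlam, ?_⟩
      by_cases hD' : D ∈ F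
      · have hsum : ∑ A ∈ F, (A.card - 1) = (D.card - 1) + ∑ A ∈ F.erase D, (A.card - 1) := by
          rw [Nat.add_comm, Finset.sum_erase_add _ _ hD']
        have hbnd := key (F.erase D)
          (fun A hA => hF A (Finset.mem_of_mem_erase hA))
          (fun A hA B hB => hlam A (Finset.mem_of_mem_erase hA) B (Finset.mem_of_mem_erase hB))
          (fun A hA => (Finset.mem_erase.mp hA).1)
        have hDc : 2 ≤ D.card := (hF D hD').2
        rw [hsum, tri_succ_eq D.card (by omega)]
        omega
      · have : ∀ A ∈ F, A ≠ D := fun A hA h => hD' (h ▸ hA)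
        calc ∑ A ∈ F, (A.card - 1) ≤ tri (D.card - 1) := key F hF hlam this
          _ ≤ tri D.card := tri_mono (by omega)
    intro F hF hlam hne
    -- assign to each A a maximal element of F above it
    have hfilt : ∀ A ∈ F, (F.filter fun B => A ⊆ B).Nonempty :=
      fun A hA => ⟨A, Finset.mem_filter.mpr ⟨hA, subset_rfl⟩⟩
    classical
    set t : Finset X → Finset X := fun A =>
      if hA : A ∈ F then (fs_exists_maximal _ (hfilt A hA)).choose else A with ht
    have htspec : ∀ A ∈ F, t A ∈ F ∧ A ⊆ t A ∧ ∀ C ∈ F, ¬ t A ⊂ C := by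
      intro A hA
      have hteq : t A = (fs_exists_maximal _ (hfilt A hA)).choose := by
        rw [ht]; exact dif_pos hA
      obtain ⟨h1, h2⟩ := (fs_exists_maximal _ (hfilt A hA)).choose_spec
      rw [← hteq] at h1 h2
      have h1' := Finset.mem_filter.mp h1
      refine ⟨h1'.1, h1'.2, fun C hC hsub => ?_⟩
      exact h2 C (Finset.mem_filter.mpr ⟨hC, h1'.2.trans hsub.subset⟩)
        (Finset.lt_iff_ssubset.mpr hsub)
    have htmaps : ∀ A ∈ F, t A ∈ F.image t := fun A hA => Finset.mem_image_of_mem t hA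
    have htfix : ∀ M ∈ F.image t, t M = M ∧ M ∈ F ∧ ∀ C ∈ F, ¬ M ⊂ C := by
      intro M hM
      obtain ⟨A, hA, rfl⟩ := Finset.mem_image.mp hM
      obtain ⟨h1, h2, h3⟩ := htspec A hA
      obtain ⟨g1, g2, g3⟩ := htspec (t A) h1
      have : t (t A) = t A := by
        by_contra hne'
        exact h3 _ g1 (ssubset_of_subset_of_ne g2 (fun h => hne' h.symm))
      exact ⟨this, h1, h3⟩
    have hsplit : ∑ M ∈ F.image t, ∑ A ∈ F.filter (fun A => t A = M), (A.card - 1) =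
        ∑ A ∈ F, (A.card - 1) := Finset.sum_fiberwise_of_maps_to htmaps _
    -- bound each fiber by tri |M|
    have hfib : ∀ M ∈ F.image t,
        ∑ A ∈ F.filter (fun A => t A = M), (A.card - 1) ≤ tri M.card := by
      intro M hM
      obtain ⟨htM, hMF, hMmax⟩ := htfix M hM
      have hMD := (hF M hMF).1
      have hMc := (hF M hMF).2
      have hMne : M ≠ D := hne M hMF
      have hMcard : M.card ≤ N := by
        have hss : M ⊂ D := ssubset_of_subset_of_ne hMD hMne
        have := Finset.card_lt_card hss
        omega
      have hMin : M ∈ F.filter (fun A => t A = M) := Finset.mem_filter.mpr ⟨hMF, htM⟩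
      have hsub : ∀ A ∈ (F.filter (fun A => t A = M)).erase M, A ⊆ M ∧ 2 ≤ A.card := by
        intro A hA
        obtain ⟨hne', hA'⟩ := Finset.mem_erase.mp hA
        obtain ⟨hAF, hAt⟩ := Finset.mem_filter.mp hA'
        exact ⟨hAt ▸ (htspec A hAF).2.1, (hF A hAF).2⟩
      have hlam' : ∀ A ∈ (F.filter (fun A => t A = M)).erase M,
          ∀ B ∈ (F.filter (fun A => t A = M)).erase M, A ∩ B = ∅ ∨ A ⊆ B ∨ B ⊆ A := by
        intro A hA B hB
        exact hlam A (Finset.mem_filter.mp (Finset.mem_of_mem_erase hA)).1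
          B (Finset.mem_filter.mp (Finset.mem_of_mem_erase hB)).1
      have hne' : ∀ A ∈ (F.filter (fun A => t A = M)).erase M, A ≠ M :=
        fun A hA => (Finset.mem_erase.mp hA).1
      have hIH := (ih M hMcard _ hsub hlam').1 hne'
      have : ∑ A ∈ F.filter (fun A => t A = M), (A.card - 1) =
          (M.card - 1) + ∑ A ∈ (F.filter (fun A => t A = M)).erase M, (A.card - 1) := by
        rw [Nat.add_comm, Finset.sum_erase_add _ _ hMin]
      rw [this, tri_succ_eq M.card (by omega)]
      omega
    -- the maximal sets are pairwise disjoint subsets of D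
    have hdisj : ∀ M ∈ F.image t, ∀ M' ∈ F.image t, M ≠ M' → M ∩ M' = ∅ := by
      intro M hM M' hM' hMM'
      obtain ⟨htM, hMF, hMmax⟩ := htfix M hM
      obtain ⟨htM', hM'F, hM'max⟩ := htfix M' hM'
      rcases hlam M hMF M' hM'F with h | h | h
      · exact h
      · exact absurd (ssubset_of_subset_of_ne h hMM') (hMmax M' hM'F)
      · exact absurd (ssubset_of_subset_of_ne h hMM'.symm) (hM'max M hMF)
    rcases (F.image t).eq_empty_or_nonempty with him | him
    · have : F = ∅ := by
        rw [Finset.eq_empty_iff_forall_notMem]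
        intro A hA
        exact absurd (htmaps A hA) (him ▸ Finset.notMem_empty _)
      simp [this]
    · have hcards : ∀ M ∈ F.image t, 1 ≤ M.card := by
        intro M hM
        have := (hF M (htfix M hM).2.1).2
        omega
      have hdisj' : ∀ M ∈ F.image t, ∀ M' ∈ F.image t, M ≠ M' → Disjoint (id M) (id M') := by
        intro M hM M' hM' hne'
        simpa [Finset.disjoint_iff_inter_eq_empty] using hdisj M hM M' hM' hne'
      have hsumM : ∑ M ∈ F.image t, M.card ≤ D.card := by
        have hcb : ∑ M ∈ F.image t, M.card = ((F.image t).biUnion id).card := by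
          rw [Finset.card_biUnion hdisj']
          rfl
        rw [hcb]
        refine Finset.card_le_card ?_
        intro x hx
        obtain ⟨M, hM, hxM⟩ := Finset.mem_biUnion.mp hx
        exact (hF M (htfix M hM).2.1).1 hxM
      have hfold := tri_fold (F.image t) Finset.card him hcards
      have hbound : (∑ M ∈ F.image t, M.card) - ((F.image t).card - 1) ≤ D.card - 1 := by
        rcases Nat.eq_or_lt_of_le him.card_pos with h1 | h1
        · -- exactly one maximal set
          obtain ⟨M, hMeq⟩ := Finset.card_eq_one.mp h1.symm
          rw [hMeq]
          simp only [Finset.sum_singleton, Finset.card_singleton]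
          have hMim : M ∈ F.image t := by rw [hMeq]; exact Finset.mem_singleton_self M
          have hMF := (htfix M hMim).2.1
          have hss : M ⊂ D := ssubset_of_subset_of_ne (hF M hMF).1 (hne M hMF)
          have := Finset.card_lt_card hss
          omega
        · have := him.card_pos
          omega
      calc ∑ A ∈ F, (A.card - 1) = _ := hsplit.symm
        _ ≤ ∑ M ∈ F.image t, tri M.card := Finset.sum_le_sum hfib
        _ ≤ tri ((∑ M ∈ F.image t, M.card) - ((F.image t).card - 1)) := hfold
        _ ≤ tri (D.card - 1) := tri_mono hbound

end Laminar
section Binding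
set_option linter.unusedSectionVars false
set_option linter.unusedVariables false
set_option maxHeartbeats 2000000

variable {X : Type*} [DecidableEq X] [Fintype X]
variable {H H' K : Finset (Finset X)}
variable {A B D E E1 E2 U : Finset X}

theorem sum_erase_split (s : Finset (Finset X)) (f : Finset X → ℕ) (a : Finset X) :
    ∑ x ∈ s, f x = (∑ x ∈ s.erase a, f x) + (if a ∈ s then f a else 0) := by
  by_cases h : a ∈ s
  · rw [if_pos h, Finset.sum_erase_add _ _ h]
  · rw [if_neg h, Finset.erase_eq_of_notMem h, Nat.add_zero]

theorem mem_binding {S : Finset X} :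
    S ∈ binding H E1 E2 ↔ (S ∈ H ∧ ¬((S = E1 ∨ S = E2) ∧ 1 < S.card)) ∨ S = E1 ∪ E2 := by
  simp [binding, Finset.mem_union, Finset.mem_filter]
  tauto

/-- The context for a valid binding: `D ∉ H` is laminar-compatible with `H`,
and `E1 ≠ E2` are maximal elements of `H` strictly below `D`. -/
structure BindingCtx (H : Finset (Finset X)) (D E1 E2 : Finset X) : Prop where
  hH : IsHierarchy H
  hDH : D ∉ H
  hDu : D ≠ Finset.univ
  hDlam : ∀ F ∈ H, F ∩ D = ∅ ∨ F ⊆ D ∨ D ⊆ F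
  hE1 : E1 ∈ H
  hE2 : E2 ∈ H
  hE1D : E1 ⊂ D
  hE2D : E2 ⊂ D
  hne : E1 ≠ E2
  hmax1 : ∀ F ∈ H, ¬(E1 ⊂ F ∧ F ⊂ D)
  hmax2 : ∀ F ∈ H, ¬(E2 ⊂ F ∧ F ⊂ D)

namespace BindingCtx

variable (ctx : BindingCtx H D E1 E2)
include ctx

theorem e1ne : E1.Nonempty := ctx.hH.2.2.1 E1 ctx.hE1
theorem e2ne : E2.Nonempty := ctx.hH.2.2.1 E2 ctx.hE2

theorem disj : E1 ∩ E2 = ∅ := by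
  rcases ctx.hH.2.2.2 E1 ctx.hE1 E2 ctx.hE2 with h | h | h
  · exact h
  · rcases eq_or_ne E1 E2 with rfl | hne
    · exact absurd rfl ctx.hne
    · exact absurd ⟨ssubset_of_subset_of_ne h hne, ctx.hE2D⟩ (ctx.hmax1 E2 ctx.hE2)
  · rcases eq_or_ne E1 E2 with rfl | hne
    · exact absurd rfl ctx.hne
    · exact absurd ⟨ssubset_of_subset_of_ne h hne.symm, ctx.hE1D⟩
        (ctx.hmax2 E1 ctx.hE1)

/-- anything in `H` strictly above `E1` is strictly above `D`. -/
theorem parent1 : ∀ F ∈ H, E1 ⊂ F → D ⊂ F := by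
  intro F hF hssub
  rcases ctx.hDlam F hF with h | h | h
  · exfalso
    obtain ⟨y, hy⟩ := ctx.e1ne
    have : y ∈ F ∩ D := Finset.mem_inter.mpr ⟨hssub.subset hy, ctx.hE1D.subset hy⟩
    rw [h] at this
    exact absurd this (Finset.notMem_empty y)
  · exact absurd ⟨hssub, ssubset_of_subset_of_ne h (fun hh => ctx.hDH (hh ▸ hF))⟩
      (ctx.hmax1 F hF)
  · exact ssubset_of_subset_of_ne h (fun hh => ctx.hDH (hh.symm ▸ hF))

theorem parent2 : ∀ F ∈ H, E2 ⊂ F → D ⊂ F := by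
  intro F hF hssub
  rcases ctx.hDlam F hF with h | h | h
  · exfalso
    obtain ⟨y, hy⟩ := ctx.e2ne
    have : y ∈ F ∩ D := Finset.mem_inter.mpr ⟨hssub.subset hy, ctx.hE2D.subset hy⟩
    rw [h] at this
    exact absurd this (Finset.notMem_empty y)
  · exact absurd ⟨hssub, ssubset_of_subset_of_ne h (fun hh => ctx.hDH (hh ▸ hF))⟩
      (ctx.hmax2 F hF)
  · exact ssubset_of_subset_of_ne h (fun hh => ctx.hDH (hh.symm ▸ hF))

theorem ussub1 : E1 ⊂ E1 ∪ E2 := by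
  refine ssubset_of_subset_of_ne Finset.subset_union_left (fun h => ?_)
  obtain ⟨y, hy⟩ := ctx.e2ne
  have hyu : y ∈ E1 := h.symm ▸ (Finset.mem_union_right E1 hy)
  have : y ∈ E1 ∩ E2 := Finset.mem_inter.mpr ⟨hyu, hy⟩
  rw [ctx.disj] at this
  exact absurd this (Finset.notMem_empty y)

theorem ussub2 : E2 ⊂ E1 ∪ E2 := by
  refine ssubset_of_subset_of_ne Finset.subset_union_right (fun h => ?_)
  obtain ⟨y, hy⟩ := ctx.e1ne
  have hyu : y ∈ E2 := h.symm ▸ (Finset.mem_union_left E2 hy)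
  have : y ∈ E1 ∩ E2 := Finset.mem_inter.mpr ⟨hy, hyu⟩
  rw [ctx.disj] at this
  exact absurd this (Finset.notMem_empty y)

theorem usubD : E1 ∪ E2 ⊆ D := Finset.union_subset ctx.hE1D.subset ctx.hE2D.subset

theorem unotmem : E1 ∪ E2 ∉ H := by
  intro h
  have := ctx.parent1 _ h ctx.ussub1
  exact absurd (this.trans_subset ctx.usubD) (ssubset_irrefl D)

theorem uproper : E1 ∪ E2 ≠ Finset.univ := by
  intro h
  exact ctx.hDu (Finset.univ_subset_iff.mp (h ▸ ctx.usubD))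

theorem ucard : (E1 ∪ E2).card = E1.card + E2.card := by
  rw [Finset.card_union_of_disjoint (Finset.disjoint_iff_inter_eq_empty.mpr ctx.disj)]

theorem ucard2 : 1 < (E1 ∪ E2).card := by
  have h1 := ctx.e1ne.card_pos
  have h2 := ctx.e2ne.card_pos
  have := ctx.ucard
  omega

/-- anything in H is laminar-compatible with the union. -/
theorem ulam : ∀ F ∈ H, F ∩ (E1 ∪ E2) = ∅ ∨ F ⊆ E1 ∪ E2 ∨ (E1 ∪ E2) ⊆ F := by
  intro F hF
  rcases ctx.hH.2.2.2 F hF E1 ctx.hE1 with h1 | h1 | h1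
  · rcases ctx.hH.2.2.2 F hF E2 ctx.hE2 with h2 | h2 | h2
    · refine Or.inl ?_
      rw [Finset.inter_union_distrib_left, h1, h2]
      simp
    · exact Or.inr (Or.inl (h2.trans Finset.subset_union_right))
    · -- E2 ⊆ F
      rcases eq_or_ne E2 F with rfl | hne'
      · exact Or.inr (Or.inl Finset.subset_union_right)
      · have hDF := ctx.parent2 F hF (ssubset_of_subset_of_ne h2 hne')
        exact Or.inr (Or.inr (ctx.usubD.trans hDF.subset))
  · exact Or.inr (Or.inl (h1.trans Finset.subset_union_left))
  · rcases eq_or_ne E1 F with rfl | hne'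
    · exact Or.inr (Or.inl Finset.subset_union_left)
    · have hDF := ctx.parent1 F hF (ssubset_of_subset_of_ne h1 hne')
      exact Or.inr (Or.inr (ctx.usubD.trans hDF.subset))

theorem binding_hier : IsHierarchy (binding H E1 E2) := by
  have hE1u : E1 ≠ Finset.univ := fun h =>
    ctx.hDu (Finset.univ_subset_iff.mp (h ▸ ctx.hE1D.subset))
  have hE2u : E2 ≠ Finset.univ := fun h =>
    ctx.hDu (Finset.univ_subset_iff.mp (h ▸ ctx.hE2D.subset))
  refine ⟨?_, ?_, ?_, ?_⟩
  · exact mem_binding.mpr (Or.inl ⟨ctx.hH.1, fun ⟨h, _⟩ =>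
      h.elim (fun h => hE1u h.symm) (fun h => hE2u h.symm)⟩)
  · intro x
    exact mem_binding.mpr (Or.inl ⟨ctx.hH.2.1 x, fun ⟨_, hc⟩ => by simp at hc⟩)
  · intro A hA
    rcases mem_binding.mp hA with ⟨hA', _⟩ | rfl
    · exact ctx.hH.2.2.1 A hA'
    · exact ctx.e1ne.mono Finset.subset_union_left
  · intro A hA B hB
    rcases mem_binding.mp hA with ⟨hA', _⟩ | rfl
    · rcases mem_binding.mp hB with ⟨hB', _⟩ | rfl
      · exact ctx.hH.2.2.2 A hA' B hB'
      · exact ctx.ulam A hA'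
    · rcases mem_binding.mp hB with ⟨hB', _⟩ | rfl
      · rcases ctx.ulam B hB' with h | h | h
        · exact Or.inl (by rwa [Finset.inter_comm] at h)
        · exact Or.inr (Or.inr h)
        · exact Or.inr (Or.inl h)
      · exact Or.inr (Or.inl subset_rfl)

theorem binding_rank : rankHP (binding H E1 E2) = rankHP H + 1 := by
  classical
  set H0 := H.filter fun C => ¬((C = E1 ∨ C = E2) ∧ 1 < C.card) with hH0
  have hbind : binding H E1 E2 = insert (E1 ∪ E2) H0 := by
    ext S
    rw [mem_binding, Finset.mem_insert, hH0, Finset.mem_filter]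
    tauto
  have hUH0 : E1 ∪ E2 ∉ H0 := fun h => ctx.unotmem (Finset.mem_filter.mp h).1
  have hP0 : properClusters H0 = ((properClusters H).erase E1).erase E2 := by
    ext A
    simp only [mem_properClusters, hH0, Finset.mem_filter, Finset.mem_erase]
    constructor
    · rintro ⟨⟨hA, hcond⟩, hu, hc⟩
      refine ⟨?_, ?_, hA, hu, hc⟩ <;> · rintro rfl; exact hcond ⟨by tauto, hc⟩
    · rintro ⟨h2, h1, hA, hu, hc⟩
      exact ⟨⟨hA, fun ⟨hor, _⟩ => hor.elim h1 h2⟩, hu, hc⟩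
  have hrank0 : rankHP H = rankHP H0 + (E1.card - 1) + (E2.card - 1) := by
    rw [rankHP, rankHP, hP0]
    have s1 := sum_erase_split (properClusters H) (fun A => A.card - 1) E1
    have s2 := sum_erase_split ((properClusters H).erase E1) (fun A => A.card - 1) E2
    have hE1mem : E1 ∈ properClusters H ↔ 1 < E1.card := by
      rw [mem_properClusters]
      exact ⟨fun h => h.2.2, fun h => ⟨ctx.hE1, fun hu =>
        ctx.hDu (Finset.univ_subset_iff.mp (hu ▸ ctx.hE1D.subset)), h⟩⟩
    have hE2mem : E2 ∈ (properClusters H).erase E1 ↔ 1 < E2.card := by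
      rw [Finset.mem_erase, mem_properClusters]
      exact ⟨fun h => h.2.2.2, fun h => ⟨ctx.hne.symm, ctx.hE2, fun hu =>
        ctx.hDu (Finset.univ_subset_iff.mp (hu ▸ ctx.hE2D.subset)), h⟩⟩
    by_cases h1 : 1 < E1.card <;> by_cases h2 : 1 < E2.card <;>
      (try simp only [hE1mem.mpr, hE2mem.mpr, if_pos, if_neg] at s1 s2) <;>
      first
        | (rw [if_pos (hE1mem.mpr h1)] at s1; rw [if_pos (hE2mem.mpr h2)] at s2; omega)
        | (rw [if_pos (hE1mem.mpr h1)] at s1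
           rw [if_neg (fun hc => h2 (hE2mem.mp hc))] at s2; omega)
        | (rw [if_neg (fun hc => h1 (hE1mem.mp hc))] at s1
           rw [if_pos (hE2mem.mpr h2)] at s2; omega)
        | (rw [if_neg (fun hc => h1 (hE1mem.mp hc))] at s1
           rw [if_neg (fun hc => h2 (hE2mem.mp hc))] at s2; omega)
  have hins : rankHP (insert (E1 ∪ E2) H0) = rankHP H0 + ((E1 ∪ E2).card - 1) :=
    rank_insert_of_proper hUH0 ctx.uproper ctx.ucard2
  have huc := ctx.ucard
  have h1 := ctx.e1ne.card_pos
  have h2 := ctx.e2ne.card_pos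
  rw [hbind, hins]
  omega

theorem binding_le : LeHP H (binding H E1 E2) := by
  refine ⟨fun S => if (S = E1 ∨ S = E2) ∧ 1 < S.card then E1 ∪ E2 else S, ?_, ?_, ?_, ?_⟩
  · intro S hS
    show (if (S = E1 ∨ S = E2) ∧ 1 < S.card then E1 ∪ E2 else S) ∈ binding H E1 E2
    by_cases h : (S = E1 ∨ S = E2) ∧ 1 < S.card
    · rw [if_pos h]
      exact mem_binding.mpr (Or.inr rfl)
    · rw [if_neg h]
      exact mem_binding.mpr (Or.inl ⟨hS, h⟩)
  · intro x
    show (if (({x} : Finset X) = E1 ∨ ({x} : Finset X) = E2) ∧ 1 < ({x} : Finset X).card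
        then E1 ∪ E2 else {x}) = {x}
    rw [if_neg (fun h => by simpa using h.2)]
  · intro S hS
    show S ⊆ if (S = E1 ∨ S = E2) ∧ 1 < S.card then E1 ∪ E2 else S
    by_cases h : (S = E1 ∨ S = E2) ∧ 1 < S.card
    · rw [if_pos h]
      rcases h.1 with rfl | rfl
      · exact Finset.subset_union_left
      · exact Finset.subset_union_right
    · rw [if_neg h]
  · intro S hS T hT hST
    show (if (S = E1 ∨ S = E2) ∧ 1 < S.card then E1 ∪ E2 else S) ⊂
      (if (T = E1 ∨ T = E2) ∧ 1 < T.card then E1 ∪ E2 else T)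
    by_cases h : (S = E1 ∨ S = E2) ∧ 1 < S.card
    · rw [if_pos h]
      have hDT : D ⊂ T := by
        rcases h.1 with rfl | rfl
        · exact ctx.parent1 T hT hST
        · exact ctx.parent2 T hT hST
      have hUT : (E1 ∪ E2) ⊂ T := lt_of_le_of_lt ctx.usubD hDT
      have hTcond : ¬((T = E1 ∨ T = E2) ∧ 1 < T.card) := by
        rintro ⟨(rfl | rfl), _⟩
        · exact absurd (ctx.hE1D.trans hDT) (ssubset_irrefl T)
        · exact absurd (ctx.hE2D.trans hDT) (ssubset_irrefl T)
      rw [if_neg hTcond]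
      exact hUT
    · rw [if_neg h]
      by_cases h' : (T = E1 ∨ T = E2) ∧ 1 < T.card
      · rw [if_pos h']
        rcases h'.1 with rfl | rfl
        · exact hST.trans_subset Finset.subset_union_left
        · exact hST.trans_subset Finset.subset_union_right
      · rw [if_neg h']
        exact hST

end BindingCtx

/-- two distinct maximal elements of `H` strictly below `D` exist whenever `D ∉ H`
is nonempty and laminar-compatible. -/
theorem exists_two_children (hH : IsHierarchy H) (hDne : D.Nonempty) (hDH : D ∉ H) :
    ∃ E1 E2 : Finset X, E1 ∈ H ∧ E2 ∈ H ∧ E1 ⊂ D ∧ E2 ⊂ D ∧ E1 ≠ E2 ∧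
      (∀ F ∈ H, ¬(E1 ⊂ F ∧ F ⊂ D)) ∧ (∀ F ∈ H, ¬(E2 ⊂ F ∧ F ⊂ D)) := by
  classical
  have hsing : ∀ x ∈ D, ({x} : Finset X) ⊂ D := by
    intro x hx
    refine ssubset_of_subset_of_ne (Finset.singleton_subset_iff.mpr hx) (fun h => hDH ?_)
    rw [← h]; exact hH.2.1 x
  have hmaxex : ∀ x ∈ D, ∃ M, M ∈ H ∧ x ∈ M ∧ M ⊂ D ∧ ∀ F ∈ H, ¬(M ⊂ F ∧ F ⊂ D) := by
    intro x hx
    obtain ⟨M, hM, hMmax⟩ := fs_exists_maximal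
      (H.filter fun B => x ∈ B ∧ B ⊂ D) ⟨{x}, Finset.mem_filter.mpr
        ⟨hH.2.1 x, Finset.mem_singleton_self x, hsing x hx⟩⟩
    obtain ⟨hMH, hxM, hMD⟩ := Finset.mem_filter.mp hM
    refine ⟨M, hMH, hxM, hMD, fun F hF ⟨h1, h2⟩ => ?_⟩
    exact hMmax F (Finset.mem_filter.mpr ⟨hF, h1.subset hxM, h2⟩) (Finset.lt_iff_ssubset.mpr h1)
  obtain ⟨x, hx⟩ := hDne
  obtain ⟨M1, hM1H, hxM1, hM1D, hmax1⟩ := hmaxex x hx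
  obtain ⟨y, hyD, hyM1⟩ : ∃ y ∈ D, y ∉ M1 := by
    by_contra h
    push_neg at h
    exact absurd (Finset.Subset.antisymm hM1D.subset h) hM1D.ne
  obtain ⟨M2, hM2H, hyM2, hM2D, hmax2⟩ := hmaxex y hyD
  exact ⟨M1, M2, hM1H, hM2H, hM1D, hM2D, fun h => hyM1 (h ▸ hyM2), hmax1, hmax2⟩

end Binding
section Monster
set_option linter.unusedSectionVars false
set_option linter.unusedVariables false
set_option maxHeartbeats 4000000

variable {X : Type*} [DecidableEq X] [Fintype X]
variable {H H' K : Finset (Finset X)} {δ : Finset X → Finset X}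
variable {A B D E U : Finset X}

theorem cover_rank_succ (hH : IsHierarchy H) (hH' : IsHierarchy H') (hc : CoversHP H H') :
    rankHP H' = rankHP H + 1 := by
  classical
  obtain ⟨⟨δ, hm⟩, hneq, hmin⟩ := hc
  have hlt : rankHP H < rankHP H' := rank_lt_of_lt hH hH' ⟨δ, hm⟩ hneq
  by_contra hcon
  have hge2 : rankHP H + 2 ≤ rankHP H' := by omega
  -- the image hierarchy
  set H1 := H.image δ with hH1def
  have hsub1 : H1 ⊆ H' := by
    intro S hS
    obtain ⟨A, hA, rfl⟩ := Finset.mem_image.mp hS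
    exact hm.1 A hA
  have hH1 : IsHierarchy H1 := by
    refine ⟨?_, ?_, fun A hA => hH'.2.2.1 A (hsub1 hA), fun A hA B hB =>
      hH'.2.2.2 A (hsub1 hA) B (hsub1 hB)⟩
    · have := hpmap_univ hm hH.1
      rw [← this]
      exact Finset.mem_image_of_mem δ hH.1
    · intro x
      have := hm.2.1 x
      rw [← this]
      exact Finset.mem_image_of_mem δ (hH.2.1 x)
  have hle1 : LeHP H H1 :=
    ⟨δ, fun A hA => Finset.mem_image_of_mem δ hA, hm.2.1, hm.2.2.1, hm.2.2.2⟩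
  rcases hmin H1 hH1 hle1 (LeHP.of_subset hsub1) with hH1H | hH1H'
  · -- CASE B : H ⊆ H'
    have hss : H ⊆ H' := by
      intro S hS
      have : δ S ∈ H1 := Finset.mem_image_of_mem δ hS
      -- H1 = H and δ is the identity on H by rank equality
      have hrk : rankHP H1 ≤ rankHP H := le_of_eq (by rw [hH1H])
      have := eq_of_le_of_rank_le hH hH1 hle1 hrk
      -- from H = H1 ⊆ H'
      exact hsub1 (by rw [hH1H]; exact hS)
    obtain ⟨D, hD, hDmin⟩ := fs_exists_minimal (H' \ H) (by
      rcases Finset.sdiff_nonempty.mpr (fun hcontra => hneq (Finset.Subset.antisymm hss hcontra)) with ⟨D, hD⟩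
      exact ⟨D, hD⟩)
    obtain ⟨hDH', hDH⟩ := Finset.mem_sdiff.mp hD
    have hDne : D.Nonempty := hH'.2.2.1 D hDH'
    have hDu : D ≠ Finset.univ := fun h => hDH (h ▸ hH.1)
    have hDlam : ∀ F ∈ H, F ∩ D = ∅ ∨ F ⊆ D ∨ D ⊆ F :=
      fun F hF => hH'.2.2.2 F (hss hF) D hDH'
    obtain ⟨E1, E2, hE1, hE2, hE1D, hE2D, hEne, hmax1, hmax2⟩ :=
      exists_two_children hH hDne hDH
    have ctx : BindingCtx H D E1 E2 :=
      ⟨hH, hDH, hDu, hDlam, hE1, hE2, hE1D, hE2D, hEne, hmax1, hmax2⟩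
    set K := binding H E1 E2 with hKdef
    have hKle' : LeHP K H' := by
      refine ⟨fun S => if S = E1 ∪ E2 then D else S, ?_, ?_, ?_, ?_⟩
      · intro S hS
        show (if S = E1 ∪ E2 then D else S) ∈ H'
        by_cases h : S = E1 ∪ E2
        · rw [if_pos h]; exact hDH'
        · rw [if_neg h]
          rcases mem_binding.mp hS with ⟨h1, _⟩ | h1
          · exact hss h1
          · exact absurd h1 h
      · intro x
        show (if ({x} : Finset X) = E1 ∪ E2 then D else {x}) = {x}
        rw [if_neg (fun h => by have := ctx.ucard2; rw [← h] at this; simp at this)]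
      · intro S hS
        show S ⊆ if S = E1 ∪ E2 then D else S
        by_cases h : S = E1 ∪ E2
        · rw [if_pos h, h]; exact ctx.usubD
        · rw [if_neg h]
      · intro S hS T hT hST
        show (if S = E1 ∪ E2 then D else S) ⊂ (if T = E1 ∪ E2 then D else T)
        have hTne : T ≠ E1 ∪ E2 ∨ S ≠ E1 ∪ E2 := by
          by_cases h : S = E1 ∪ E2
          · left; intro h2; rw [h, h2] at hST; exact ssubset_irrefl _ hST
          · right; exact h
        by_cases h : S = E1 ∪ E2
        · rw [if_pos h]
          have hT' : T ≠ E1 ∪ E2 := by tauto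
          rw [if_neg hT']
          subst h
          have hTH : T ∈ H := by
            rcases mem_binding.mp hT with ⟨h1, _⟩ | h1
            · exact h1
            · exact absurd h1 hT'
          exact ctx.parent1 T hTH (ctx.ussub1.trans hST)
        · rw [if_neg h]
          by_cases h' : T = E1 ∪ E2
          · rw [if_pos h']
            subst h'
            exact hST.trans_subset ctx.usubD
          · rw [if_neg h']
            exact hST
    rcases hmin K ctx.binding_hier ctx.binding_le hKle' with h | h
    · have := ctx.binding_rank
      rw [← hKdef, h] at this
      omega
    · have := ctx.binding_rank
      rw [← hKdef, h] at this
      omega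
  · -- CASE C : δ is surjective onto H'
    have hsurj : ∀ E ∈ properClusters H', ∃ B ∈ properClusters H, δ B = E := by
      intro E hE
      obtain ⟨hEH', hEu, hEc⟩ := mem_properClusters.mp hE
      have hEim : E ∈ H1 := by rw [hH1H']; exact hEH'
      obtain ⟨B, hB, rfl⟩ := Finset.mem_image.mp hEim
      rcases hH.mem_break hB with rfl | ⟨x, rfl⟩ | hp
      · rw [hpmap_univ hm hH.1] at hEu; exact absurd rfl hEu
      · rw [hm.2.1 x] at hEc; simp at hEc
      · exact ⟨B, hp, rfl⟩
    set fib : Finset X → Finset (Finset X) :=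
      fun Dd => (properClusters H).filter (fun A => δ A = Dd) with hfibdef
    set fibs : Finset X → ℕ := fun Dd => ∑ A ∈ fib Dd, (A.card - 1) with hfibsdef
    have hfibprops : ∀ Dd : Finset X, (∀ A ∈ fib Dd, A ⊆ Dd) ∧ (∀ A ∈ fib Dd, A.Nonempty) ∧
        (∀ A ∈ fib Dd, ∀ B ∈ fib Dd, A ≠ B → A ∩ B = ∅) := by
      intro Dd
      refine ⟨fun A hA => ?_, fun A hA => ?_, fun A hA B hB hne => ?_⟩
      · obtain ⟨h1, h2⟩ := Finset.mem_filter.mp hA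
        exact h2 ▸ hm.2.2.1 A (properClusters_subset h1)
      · exact card_pos_of_proper (Finset.mem_filter.mp hA).1
      · obtain ⟨h1, h2⟩ := Finset.mem_filter.mp hA
        obtain ⟨h3, h4⟩ := Finset.mem_filter.mp hB
        exact hpmap_fiber_disj hm hH (properClusters_subset h1) (properClusters_subset h3)
          (h2.trans h4.symm) hne
    have hfible : ∀ Dd ∈ properClusters H', fibs Dd ≤ Dd.card - 1 := by
      intro Dd hDd
      obtain ⟨p1, p2, p3⟩ := hfibprops Dd
      exact sum_card_le _ Dd p1 p2 p3 (card_pos_of_proper hDd)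
    have hsplit : ∑ Dd ∈ properClusters H', fibs Dd = rankHP H :=
      Finset.sum_fiberwise_of_maps_to (fun A hA => hpmap_proper hm hH.1 hA) _
    have hexist : ∃ Dd ∈ properClusters H', fibs Dd < Dd.card - 1 := by
      by_contra hno
      push_neg at hno
      have : rankHP H' ≤ rankHP H := by
        rw [← hsplit, rankHP]
        exact Finset.sum_le_sum (fun Dd hDd => hno Dd hDd)
      omega
    obtain ⟨D, hDf, hDminim⟩ := fs_exists_minimal
      ((properClusters H').filter fun Dd => fibs Dd < Dd.card - 1)
      (by obtain ⟨Dd, h1, h2⟩ := hexist; exact ⟨Dd, Finset.mem_filter.mpr ⟨h1, h2⟩⟩)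
    obtain ⟨hDP, hDlt⟩ := Finset.mem_filter.mp hDf
    obtain ⟨hDH', hDu, hDc⟩ := mem_properClusters.mp hDP
    have c1 : ∀ E ∈ properClusters H', E ⊂ D → E ∈ properClusters H ∧ δ E = E := by
      intro E hE hED
      have hnot : ¬ fibs E < E.card - 1 := fun hc =>
        hDminim E (Finset.mem_filter.mpr ⟨hE, hc⟩) (Finset.lt_iff_ssubset.mpr hED)
      have heq : fibs E = E.card - 1 := by have := hfible E hE; omega
      obtain ⟨p1, p2, p3⟩ := hfibprops E
      have hEc := (mem_properClusters.mp hE).2.2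
      have hrig := sum_card_rigid _ E p1 p2 p3 (by omega) heq
      have hEfib : E ∈ fib E := by rw [hrig]; exact Finset.mem_singleton_self E
      exact ⟨(Finset.mem_filter.mp hEfib).1, (Finset.mem_filter.mp hEfib).2⟩
    set Fib := fib D with hFibdef
    have hFibmem : ∀ A ∈ Fib, A ∈ H ∧ δ A = D ∧ A ⊆ D ∧ A ≠ Finset.univ ∧ 1 < A.card := by
      intro A hA
      obtain ⟨h1, h2⟩ := Finset.mem_filter.mp hA
      obtain ⟨h3, h4, h5⟩ := mem_properClusters.mp h1
      exact ⟨h3, h2, h2 ▸ hm.2.2.1 A h3, h4, h5⟩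
    have hFibdisj := (hfibprops D).2.2
    have hDnotFib : D ∉ Fib := by
      intro h
      have hsingle : D.card - 1 ≤ fibs D :=
        Finset.single_le_sum (f := fun A : Finset X => A.card - 1) (fun _ _ => Nat.zero_le _) h
      omega
    have hFibne : Fib.Nonempty := by
      obtain ⟨B, hB, hBd⟩ := hsurj D hDP
      exact ⟨B, Finset.mem_filter.mpr ⟨hB, hBd⟩⟩
    have hFibssub : ∀ A ∈ Fib, A ⊂ D := by
      intro A hA
      exact ssubset_of_subset_of_ne (hFibmem A hA).2.2.1 (fun h => hDnotFib (h ▸ hA))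
    have hFibH' : ∀ A ∈ Fib, A ∉ H' := by
      intro A hA hAH'
      obtain ⟨h1, h2, h3, h4, h5⟩ := hFibmem A hA
      have hAP' : A ∈ properClusters H' := mem_properClusters.mpr ⟨hAH', h4, h5⟩
      have hthis := (c1 A hAP' (hFibssub A hA)).2
      rw [hthis] at h2
      exact hDnotFib (h2 ▸ hA)
    set K := (H'.erase D) ∪ Fib with hKdef
    have hKmem : ∀ S : Finset X, S ∈ K ↔ (S ∈ H' ∧ S ≠ D) ∨ S ∈ Fib := by
      intro S
      rw [hKdef, Finset.mem_union, Finset.mem_erase]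
      tauto
    have hDuniv : ∀ {F : Finset X}, F ⊂ D → F ≠ Finset.univ := by
      intro F hF hFu
      exact absurd (lt_of_lt_of_le (hFu ▸ hF) (Finset.subset_univ D)) (lt_irrefl _)
    have hcross : ∀ A ∈ Fib, ∀ F ∈ H', F ≠ D → A ∩ F = ∅ ∨ A ⊆ F ∨ F ⊆ A := by
      intro A hA F hF hFD
      obtain ⟨hAH, hAd, hAD, hAu, hAc⟩ := hFibmem A hA
      rcases hH'.2.2.2 F hF D hDH' with h | h | h
      · refine Or.inl (Finset.subset_empty.mp ?_)
        intro x hx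
        rw [← h]
        exact Finset.mem_inter.mpr ⟨(Finset.mem_inter.mp hx).2, hAD (Finset.mem_inter.mp hx).1⟩
      · have hFssD : F ⊂ D := ssubset_of_subset_of_ne h hFD
        rcases Nat.lt_or_ge 1 F.card with hc | hc
        · have hFP : F ∈ properClusters H' := mem_properClusters.mpr ⟨hF, hDuniv hFssD, hc⟩
          obtain ⟨hFPH, _⟩ := c1 F hFP hFssD
          exact hH.2.2.2 A hAH F (properClusters_subset hFPH)
        · have hFcard : F.card = 1 := by have := (hH'.2.2.1 F hF).card_pos; omega
          obtain ⟨x, rfl⟩ := Finset.card_eq_one.mp hFcard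
          by_cases hx : x ∈ A
          · exact Or.inr (Or.inr (Finset.singleton_subset_iff.mpr hx))
          · exact Or.inl (by simp [Finset.inter_singleton_of_notMem hx])
      · exact Or.inr (Or.inl (hAD.trans h))
    have hKhier : IsHierarchy K := by
      refine ⟨?_, ?_, ?_, ?_⟩
      · exact (hKmem _).mpr (Or.inl ⟨hH'.1, fun h => hDu h.symm⟩)
      · intro x
        exact (hKmem _).mpr (Or.inl ⟨hH'.2.1 x, fun h => by rw [← h] at hDc; simp at hDc⟩)
      · intro A hA
        rcases (hKmem A).mp hA with ⟨h1, _⟩ | h1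
        · exact hH'.2.2.1 A h1
        · exact (hfibprops D).2.1 A h1
      · intro A hA B hB
        rcases (hKmem A).mp hA with ⟨hA1, hA2⟩ | hA1
        · rcases (hKmem B).mp hB with ⟨hB1, hB2⟩ | hB1
          · exact hH'.2.2.2 A hA1 B hB1
          · rcases hcross B hB1 A hA1 hA2 with h | h | h
            · exact Or.inl (by rwa [Finset.inter_comm] at h)
            · exact Or.inr (Or.inr h)
            · exact Or.inr (Or.inl h)
        · rcases (hKmem B).mp hB with ⟨hB1, hB2⟩ | hB1
          · exact hcross A hA1 B hB1 hB2
          · rcases eq_or_ne A B with rfl | hne'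
            · exact Or.inr (Or.inl subset_rfl)
            · exact Or.inl (hFibdisj A hA1 B hB1 hne')
    have hdnotD : ∀ F ∈ H, F ∉ Fib → δ F ≠ D := by
      intro F hF hFFib hFD
      rcases hH.mem_break hF with rfl | ⟨x, rfl⟩ | hp
      · rw [hpmap_univ hm hH.1] at hFD
        exact hDu hFD.symm
      · rw [hm.2.1 x] at hFD
        rw [← hFD] at hDc
        simp at hDc
      · exact hFFib (Finset.mem_filter.mpr ⟨hp, hFD⟩)
    have hKle : LeHP H K := by
      refine ⟨fun F => if F ∈ Fib then F else δ F, ?_, ?_, ?_, ?_⟩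
      · intro F hF
        show (if F ∈ Fib then F else δ F) ∈ K
        by_cases h : F ∈ Fib
        · rw [if_pos h]
          exact (hKmem F).mpr (Or.inr h)
        · rw [if_neg h]
          exact (hKmem _).mpr (Or.inl ⟨hm.1 F hF, hdnotD F hF h⟩)
      · intro x
        show (if ({x} : Finset X) ∈ Fib then ({x} : Finset X) else δ {x}) = {x}
        by_cases h : ({x} : Finset X) ∈ Fib
        · rw [if_pos h]
        · rw [if_neg h]; exact hm.2.1 x
      · intro F hF
        show F ⊆ if F ∈ Fib then F else δ F
        by_cases h : F ∈ Fib
        · rw [if_pos h]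
        · rw [if_neg h]; exact hm.2.2.1 F hF
      · intro S hS T hT hST
        show (if S ∈ Fib then S else δ S) ⊂ (if T ∈ Fib then T else δ T)
        by_cases hSf : S ∈ Fib
        · rw [if_pos hSf]
          by_cases hTf : T ∈ Fib
          · exfalso
            have hd := hFibdisj S hSf T hTf hST.ne
            obtain ⟨x, hx⟩ := hH.2.2.1 S (properClusters_subset (Finset.mem_filter.mp hSf).1)
            have : x ∈ S ∩ T := Finset.mem_inter.mpr ⟨hx, hST.subset hx⟩
            rw [hd] at this
            exact absurd this (Finset.notMem_empty x)
          · rw [if_neg hTf]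
            have h1 : δ S ⊂ δ T := hm.2.2.2 S hS T hT hST
            rw [(hFibmem S hSf).2.1] at h1
            exact lt_of_le_of_lt (hFibmem S hSf).2.2.1 h1
        · rw [if_neg hSf]
          by_cases hTf : T ∈ Fib
          · rw [if_pos hTf]
            rcases hH.mem_break hS with rfl | ⟨x, rfl⟩ | hp
            · exact absurd (lt_of_lt_of_le hST (Finset.subset_univ T)) (lt_irrefl _)
            · rw [hm.2.1 x]
              exact hST
            · have hdAP : δ S ∈ properClusters H' := hpmap_proper hm hH.1 hp
              have hdSD : δ S ⊂ D := by
                have := hm.2.2.2 S hS T hT hST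
                rwa [(hFibmem T hTf).2.1] at this
              obtain ⟨hdSPH, hdSfix⟩ := c1 (δ S) hdAP hdSD
              have hTH := (hFibmem T hTf).1
              have hSne := hH.2.2.1 S hS
              have hdSne : δ S ≠ T := by
                intro hh
                have h1 : δ T = D := (hFibmem T hTf).2.1
                rw [← hh, hdSfix] at h1
                rw [h1] at hdSD
                exact ssubset_irrefl D hdSD
              rcases hH.2.2.2 (δ S) (properClusters_subset hdSPH) T hTH with h | h | h
              · exfalso
                obtain ⟨x, hx⟩ := hSne
                have : x ∈ δ S ∩ T := Finset.mem_inter.mpr ⟨hm.2.2.1 S hS hx, hST.subset hx⟩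
                rw [h] at this
                exact absurd this (Finset.notMem_empty x)
              · exact ssubset_of_subset_of_ne h hdSne
              · exfalso
                have hTdS : T ⊂ δ S := ssubset_of_subset_of_ne h (fun hh => hdSne hh.symm)
                have := hm.2.2.2 T hTH (δ S) (properClusters_subset hdSPH) hTdS
                rw [hdSfix, (hFibmem T hTf).2.1] at this
                exact absurd (this.trans hdSD) (ssubset_irrefl D)
          · rw [if_neg hTf]
            exact hm.2.2.2 S hS T hT hST
    have hKle' : LeHP K H' := by
      refine ⟨fun F => if F ∈ Fib then D else F, ?_, ?_, ?_, ?_⟩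
      · intro F hF
        show (if F ∈ Fib then D else F) ∈ H'
        by_cases h : F ∈ Fib
        · rw [if_pos h]; exact hDH'
        · rw [if_neg h]
          rcases (hKmem F).mp hF with ⟨h1, _⟩ | h1
          · exact h1
          · exact absurd h1 h
      · intro x
        show (if ({x} : Finset X) ∈ Fib then D else ({x} : Finset X)) = {x}
        rw [if_neg (fun h => by have := (hFibmem _ h).2.2.2.2; simp at this)]
      · intro F hF
        show F ⊆ if F ∈ Fib then D else F
        by_cases h : F ∈ Fib
        · rw [if_pos h]; exact (hFibmem F h).2.2.1
        · rw [if_neg h]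
      · intro S hS T hT hST
        show (if S ∈ Fib then D else S) ⊂ (if T ∈ Fib then D else T)
        by_cases hSf : S ∈ Fib
        · rw [if_pos hSf]
          by_cases hTf : T ∈ Fib
          · exfalso
            have hd := hFibdisj S hSf T hTf hST.ne
            obtain ⟨x, hx⟩ := (hfibprops D).2.1 S hSf
            have : x ∈ S ∩ T := Finset.mem_inter.mpr ⟨hx, hST.subset hx⟩
            rw [hd] at this
            exact absurd this (Finset.notMem_empty x)
          · rw [if_neg hTf]
            rcases (hKmem T).mp hT with ⟨hTH', hTD⟩ | h1
            swap
            · exact absurd h1 hTf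
            rcases hH'.2.2.2 T hTH' D hDH' with h | h | h
            · exfalso
              obtain ⟨x, hx⟩ := (hfibprops D).2.1 S hSf
              have : x ∈ T ∩ D :=
                Finset.mem_inter.mpr ⟨hST.subset hx, (hFibmem S hSf).2.2.1 hx⟩
              rw [h] at this
              exact absurd this (Finset.notMem_empty x)
            · exfalso
              have hTssD : T ⊂ D := ssubset_of_subset_of_ne h hTD
              have hTc : 1 < T.card := by
                have h1 := Finset.card_lt_card hST
                have h2 := (hFibmem S hSf).2.2.2.2
                omega
              have hTP : T ∈ properClusters H' :=
                mem_properClusters.mpr ⟨hTH', hDuniv hTssD, hTc⟩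
              obtain ⟨hTPH, hTfix⟩ := c1 T hTP hTssD
              have := hm.2.2.2 S (hFibmem S hSf).1 T (properClusters_subset hTPH) hST
              rw [hTfix, (hFibmem S hSf).2.1] at this
              exact absurd (this.trans hTssD) (ssubset_irrefl D)
            · exact ssubset_of_subset_of_ne h (fun hh => hTD hh.symm)
        · rw [if_neg hSf]
          by_cases hTf : T ∈ Fib
          · rw [if_pos hTf]
            exact hST.trans (hFibssub T hTf)
          · rw [if_neg hTf]
            exact hST
    rcases hmin K hKhier hKle hKle' with hKH | hKH'
    · -- K = H : the deep analysis
      have hHmem : ∀ S : Finset X, S ∈ H ↔ (S ∈ H' ∧ S ≠ D) ∨ S ∈ Fib := by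
        intro S
        rw [← hKH]
        exact hKmem S
      have hDnotH : D ∉ H := by
        intro h
        rcases (hHmem D).mp h with ⟨_, h2⟩ | h2
        · exact h2 rfl
        · exact hDnotFib h2
      have hmaxFib : ∀ A ∈ Fib, ∀ F ∈ H, ¬(A ⊂ F ∧ F ⊂ D) := by
        rintro A hA F hF ⟨h1, h2⟩
        rcases (hHmem F).mp hF with ⟨hF1, hF2⟩ | hFf
        · have hFc : 1 < F.card := by
            have g1 := Finset.card_lt_card h1
            have g2 := (hFibmem A hA).2.2.2.2
            omega
          have hFP : F ∈ properClusters H' := mem_properClusters.mpr ⟨hF1, hDuniv h2, hFc⟩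
          obtain ⟨hFPH, hFfix⟩ := c1 F hFP h2
          have hmono := hm.2.2.2 A (hFibmem A hA).1 F hF h1
          rw [hFfix, (hFibmem A hA).2.1] at hmono
          exact absurd (hmono.trans h2) (ssubset_irrefl D)
        · have hd := hFibdisj A hA F hFf h1.ne
          obtain ⟨x, hx⟩ := (hfibprops D).2.1 A hA
          have hmem : x ∈ A ∩ F := Finset.mem_inter.mpr ⟨hx, h1.subset hx⟩
          rw [hd] at hmem
          exact absurd hmem (Finset.notMem_empty x)
      have hDlamH : ∀ F ∈ H, F ∩ D = ∅ ∨ F ⊆ D ∨ D ⊆ F := by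
        intro F hF
        rcases (hHmem F).mp hF with ⟨h1, _⟩ | h1
        · exact hH'.2.2.2 F h1 D hDH'
        · exact Or.inr (Or.inl (hFibmem F h1).2.2.1)
      have hparentFib : ∀ A ∈ Fib, ∀ F ∈ H, A ⊂ F → D ⊂ F := by
        intro A hA F hF h1
        have hnot := hmaxFib A hA F hF
        rcases hDlamH F hF with h | h | h
        · exfalso
          obtain ⟨x, hx⟩ := (hfibprops D).2.1 A hA
          have hmem : x ∈ F ∩ D :=
            Finset.mem_inter.mpr ⟨h1.subset hx, (hFibmem A hA).2.2.1 hx⟩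
          rw [h] at hmem
          exact absurd hmem (Finset.notMem_empty x)
        · exact absurd ⟨h1, ssubset_of_subset_of_ne h (fun hh => hDnotH (hh ▸ hF))⟩ hnot
        · exact ssubset_of_subset_of_ne h (fun hh => hDnotH (hh.symm ▸ hF))
      -- rank bookkeeping
      have hPH : properClusters H = ((properClusters H').erase D) ∪ Fib := by
        ext S
        simp only [Finset.mem_union, Finset.mem_erase]
        rw [mem_properClusters, mem_properClusters]
        constructor
        · rintro ⟨hS, hSu, hSc⟩
          rcases (hHmem S).mp hS with ⟨h1, h2⟩ | h1
          · exact Or.inl ⟨h2, h1, hSu, hSc⟩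
          · exact Or.inr h1
        · rintro (⟨h2, h1, hSu, hSc⟩ | h1)
          · exact ⟨(hHmem S).mpr (Or.inl ⟨h1, h2⟩), hSu, hSc⟩
          · obtain ⟨g1, g2, g3, g4, g5⟩ := hFibmem S h1
            exact ⟨(hHmem S).mpr (Or.inr h1), g4, g5⟩
      have hdisjPF : Disjoint ((properClusters H').erase D) Fib := by
        rw [Finset.disjoint_left]
        intro S hS hSf
        exact hFibH' S hSf (properClusters_subset (Finset.mem_of_mem_erase hS))
      have hr1 : rankHP H = (∑ A ∈ (properClusters H').erase D, (A.card - 1)) + fibs D := by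
        rw [rankHP, hPH, Finset.sum_union hdisjPF]
      have hr2 : rankHP H' = (∑ A ∈ (properClusters H').erase D, (A.card - 1)) + (D.card - 1) := by
        rw [rankHP, ← Finset.sum_erase_add _ _ hDP]
      rcases Nat.lt_or_ge 1 Fib.card with hk2 | hk1
      · -- at least two fiber elements : bind two of them
        obtain ⟨A1, hA1, A2, hA2, hA12⟩ := Finset.one_lt_card.mp hk2
        have ctx2 : BindingCtx H D A1 A2 :=
          ⟨hH, hDnotH, hDu, hDlamH, (hFibmem A1 hA1).1, (hFibmem A2 hA2).1,
            hFibssub A1 hA1, hFibssub A2 hA2, hA12, hmaxFib A1 hA1, hmaxFib A2 hA2⟩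
        have hUD : A1 ∪ A2 ≠ D := by
          intro hUD
          have hcard : D.card = A1.card + A2.card := by rw [← hUD]; exact ctx2.ucard
          have hf1 : fibs D = (A1.card - 1) + ∑ A ∈ Fib.erase A1, (A.card - 1) := by
            rw [hfibsdef]
            rw [Nat.add_comm, Finset.sum_erase_add _ _ hA1]
          have hf2 : A2.card - 1 ≤ ∑ A ∈ Fib.erase A1, (A.card - 1) :=
            Finset.single_le_sum (f := fun A : Finset X => A.card - 1)
              (fun _ _ => Nat.zero_le _) (Finset.mem_erase.mpr ⟨fun h => hA12 h.symm, hA2⟩)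
          have g1 := (hFibmem A1 hA1).2.2.2.2
          have g2 := (hFibmem A2 hA2).2.2.2.2
          omega
        set K2 := binding H A1 A2 with hK2def
        have hK2le' : LeHP K2 H' := by
          refine ⟨fun F => if F = A1 ∪ A2 ∨ F ∈ Fib then D else F, ?_, ?_, ?_, ?_⟩
          · intro F hF
            show (if F = A1 ∪ A2 ∨ F ∈ Fib then D else F) ∈ H'
            by_cases h : F = A1 ∪ A2 ∨ F ∈ Fib
            · rw [if_pos h]; exact hDH'
            · rw [if_neg h]
              push_neg at h
              rcases mem_binding.mp hF with ⟨h1, _⟩ | h1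
              · rcases (hHmem F).mp h1 with ⟨g1, _⟩ | g1
                · exact g1
                · exact absurd g1 h.2
              · exact absurd h1 h.1
          · intro x
            show (if ({x} : Finset X) = A1 ∪ A2 ∨ ({x} : Finset X) ∈ Fib then D else {x}) = {x}
            rw [if_neg]
            rintro (h | h)
            · have := ctx2.ucard2; rw [← h] at this; simp at this
            · have := (hFibmem _ h).2.2.2.2; simp at this
          · intro F hF
            show F ⊆ if F = A1 ∪ A2 ∨ F ∈ Fib then D else F
            by_cases h : F = A1 ∪ A2 ∨ F ∈ Fib
            · rw [if_pos h]
              rcases h with rfl | h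
              · exact ctx2.usubD
              · exact (hFibmem F h).2.2.1
            · rw [if_neg h]
          · intro S hS T hT hST
            show (if S = A1 ∪ A2 ∨ S ∈ Fib then D else S) ⊂
              (if T = A1 ∪ A2 ∨ T ∈ Fib then D else T)
            have hSsubD : (S = A1 ∪ A2 ∨ S ∈ Fib) → S ⊆ D := by
              rintro (rfl | h)
              · exact ctx2.usubD
              · exact (hFibmem S h).2.2.1
            by_cases hSc : S = A1 ∪ A2 ∨ S ∈ Fib
            · rw [if_pos hSc]
              by_cases hTc : T = A1 ∪ A2 ∨ T ∈ Fib
              · exfalso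
                -- no strict inclusions within {U} ∪ Fib inside K2
                rcases hSc with rfl | hSf
                · rcases hTc with rfl | hTf
                  · exact ssubset_irrefl _ hST
                  · -- U ⊂ T ∈ Fib : then A1 ⊂ T ⊂ D contradicts maximality
                    exact hmaxFib A1 hA1 T (hFibmem T hTf).1
                      ⟨ctx2.ussub1.trans hST, hFibssub T hTf⟩
                · rcases hTc with rfl | hTf
                  · -- S ∈ Fib, S ⊂ A1 ∪ A2, S ∈ K2 so S ∉ {A1, A2}
                    have hSK2 : S ∈ K2 := hS
                    rcases mem_binding.mp hSK2 with ⟨h1, h2⟩ | h1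
                    · have hSA1 : S ≠ A1 := by
                        intro hh
                        exact h2 ⟨Or.inl hh, by
                          have := (hFibmem S hSf).2.2.2.2; omega⟩
                      have hSA2 : S ≠ A2 := by
                        intro hh
                        exact h2 ⟨Or.inr hh, by
                          have := (hFibmem S hSf).2.2.2.2; omega⟩
                      obtain ⟨x, hx⟩ := (hfibprops D).2.1 S hSf
                      have hxU : x ∈ A1 ∪ A2 := hST.subset hx
                      rcases Finset.mem_union.mp hxU with hx1 | hx1
                      · have hd := hFibdisj S hSf A1 hA1 hSA1
                        have : x ∈ S ∩ A1 := Finset.mem_inter.mpr ⟨hx, hx1⟩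
                        rw [hd] at this
                        exact absurd this (Finset.notMem_empty x)
                      · have hd := hFibdisj S hSf A2 hA2 hSA2
                        have : x ∈ S ∩ A2 := Finset.mem_inter.mpr ⟨hx, hx1⟩
                        rw [hd] at this
                        exact absurd this (Finset.notMem_empty x)
                    · -- S = A1 ∪ A2 contradicts S ⊂ A1 ∪ A2
                      rw [h1] at hST
                      exact ssubset_irrefl _ hST
                  · -- S, T ∈ Fib with S ⊂ T
                    have hd := hFibdisj S hSf T hTf hST.ne
                    obtain ⟨x, hx⟩ := (hfibprops D).2.1 S hSf
                    have : x ∈ S ∩ T := Finset.mem_inter.mpr ⟨hx, hST.subset hx⟩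
                    rw [hd] at this
                    exact absurd this (Finset.notMem_empty x)
              · rw [if_neg hTc]
                push_neg at hTc
                have hTH : T ∈ H := by
                  rcases mem_binding.mp hT with ⟨h1, _⟩ | h1
                  · exact h1
                  · exact absurd h1 hTc.1
                -- some element of Fib is strictly inside T
                have hfibT : ∃ A ∈ Fib, A ⊂ T := by
                  rcases hSc with rfl | hSf
                  · exact ⟨A1, hA1, ctx2.ussub1.trans hST⟩
                  · exact ⟨S, hSf, hST⟩
                obtain ⟨A, hAf, hAT⟩ := hfibT
                exact hparentFib A hAf T hTH hAT
            · rw [if_neg hSc]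
              by_cases hTc : T = A1 ∪ A2 ∨ T ∈ Fib
              · rw [if_pos hTc]
                rcases hTc with rfl | h
                · exact lt_of_lt_of_le hST ctx2.usubD
                · exact lt_of_lt_of_le hST (hFibmem T h).2.2.1
              · rw [if_neg hTc]
                exact hST
        rcases hmin K2 ctx2.binding_hier ctx2.binding_le hK2le' with h | h
        · have := ctx2.binding_rank
          rw [← hK2def, h] at this
          omega
        · have := ctx2.binding_rank
          rw [← hK2def, h] at this
          omega
      · -- exactly one fiber element A
        have hk1' : Fib.card = 1 := by
          have := hFibne.card_pos
          omega
        obtain ⟨A, hFibA⟩ := Finset.card_eq_one.mp hk1'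
        have hA : A ∈ Fib := by rw [hFibA]; exact Finset.mem_singleton_self A
        have hfibsD : fibs D = A.card - 1 := by
          rw [hfibsdef]
          show ∑ B ∈ Fib, (B.card - 1) = A.card - 1
          rw [hFibA, Finset.sum_singleton]
        have hAD : A ⊂ D := hFibssub A hA
        obtain ⟨z, hzD, hzA⟩ := Finset.exists_of_ssubset hAD
        -- maximal element of H containing z strictly below D
        have hzsing : ({z} : Finset X) ⊂ D := by
          refine ssubset_of_subset_of_ne (Finset.singleton_subset_iff.mpr hzD)
            (fun h => hDnotH ?_)
          rw [← h]; exact hH.2.1 z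
        obtain ⟨M, hMf, hMmax'⟩ := fs_exists_maximal
          (H.filter fun B => z ∈ B ∧ B ⊂ D) ⟨{z}, Finset.mem_filter.mpr
            ⟨hH.2.1 z, Finset.mem_singleton_self z, hzsing⟩⟩
        obtain ⟨hMH, hzM, hMD⟩ := Finset.mem_filter.mp hMf
        have hmaxM : ∀ F ∈ H, ¬(M ⊂ F ∧ F ⊂ D) := by
          rintro F hF ⟨h1, h2⟩
          exact hMmax' F (Finset.mem_filter.mpr ⟨hF, h1.subset hzM, h2⟩)
            (Finset.lt_iff_ssubset.mpr h1)
        have hMA : M ≠ A := fun h => hzA (h ▸ hzM)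
        have hMFib : M ∉ Fib := by rw [hFibA]; simpa using hMA
        have hparentM : ∀ F ∈ H, M ⊂ F → D ⊂ F := by
          intro F hF h1
          rcases hDlamH F hF with h | h | h
          · exfalso
            have hmem : z ∈ F ∩ D := Finset.mem_inter.mpr ⟨h1.subset hzM, hzD⟩
            rw [h] at hmem
            exact absurd hmem (Finset.notMem_empty z)
          · exact absurd ⟨h1, ssubset_of_subset_of_ne h (fun hh => hDnotH (hh ▸ hF))⟩
              (hmaxM F hF)
          · exact ssubset_of_subset_of_ne h (fun hh => hDnotH (hh.symm ▸ hF))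
        have hAMdisj : A ∩ M = ∅ := by
          rcases hH.2.2.2 A (hFibmem A hA).1 M hMH with h | h | h
          · exact h
          · exfalso
            have hAM : A ⊂ M := ssubset_of_subset_of_ne h hMA.symm
            exact hmaxFib A hA M hMH ⟨hAM, hMD⟩
          · exact absurd (h hzM) hzA
        by_cases hUMD : A ∪ M = D
        · -- bind A and M : the result is contained in H'
          have ctx6 : BindingCtx H D A M :=
            ⟨hH, hDnotH, hDu, hDlamH, (hFibmem A hA).1, hMH, hAD, hMD, hMA.symm,
              hmaxFib A hA, hmaxM⟩
          have hK6sub : binding H A M ⊆ H' := by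
            intro S hS
            rcases mem_binding.mp hS with ⟨h1, h2⟩ | h1
            · rcases (hHmem S).mp h1 with ⟨g1, _⟩ | g1
              · exact g1
              · exfalso
                have hSA : S = A := by rw [hFibA] at g1; simpa using g1
                exact h2 ⟨Or.inl hSA, by
                  have := (hFibmem A hA).2.2.2.2
                  rw [hSA]; omega⟩
            · rw [h1, hUMD]; exact hDH'
          rcases hmin (binding H A M) ctx6.binding_hier ctx6.binding_le
            (LeHP.of_subset hK6sub) with h | h
          · have := ctx6.binding_rank
            rw [h] at this
            omega
          · have := ctx6.binding_rank
            rw [h] at this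
            omega
        · -- grow A by M : K3 = insert (A ∪ M) (H.erase A)
          set W := A ∪ M with hWdef
          have hWD : W ⊆ D := Finset.union_subset hAD.subset hMD.subset
          have hWssD : W ⊂ D := ssubset_of_subset_of_ne hWD hUMD
          have hAW : A ⊂ W := by
            refine ssubset_of_subset_of_ne Finset.subset_union_left (fun h => hzA ?_)
            rw [h]
            exact Finset.mem_union_right A hzM
          have hWH : W ∉ H := fun h => hmaxFib A hA W h ⟨hAW, hWssD⟩
          have hWu : W ≠ Finset.univ := hDuniv hWssD
          have hWc : 1 < W.card := by
            have h1 := (hFibmem A hA).2.2.2.2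
            have h2 : A.card ≤ W.card := Finset.card_le_card hAW.subset
            omega
          have hAu' : A ≠ Finset.univ := (hFibmem A hA).2.2.2.1
          have hAc' : 1 < A.card := (hFibmem A hA).2.2.2.2
          have hWlam : ∀ F ∈ H.erase A, F ∩ W = ∅ ∨ F ⊆ W ∨ W ⊆ F := by
            intro F hF
            have hFH := Finset.mem_of_mem_erase hF
            have hFA := (Finset.mem_erase.mp hF).1
            rcases hH.2.2.2 F hFH A (hFibmem A hA).1 with h | h | h
            · rcases hH.2.2.2 F hFH M hMH with h2 | h2 | h2
              · refine Or.inl ?_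
                rw [hWdef, Finset.inter_union_distrib_left, h, h2]
                simp
              · exact Or.inr (Or.inl (h2.trans Finset.subset_union_right))
              · rcases eq_or_ne M F with rfl | hne'
                · exact Or.inr (Or.inl Finset.subset_union_right)
                · have := hparentM F hFH (ssubset_of_subset_of_ne h2 hne')
                  exact Or.inr (Or.inr (hWD.trans this.subset))
            · exact Or.inr (Or.inl (h.trans Finset.subset_union_left))
            · have hAF : A ⊂ F := ssubset_of_subset_of_ne h (fun hh => hFA hh.symm)
              have := hparentFib A hA F hFH hAF
              exact Or.inr (Or.inr (hWD.trans this.subset))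
          set K3 := insert W (H.erase A) with hK3def
          have hK3mem : ∀ S : Finset X, S ∈ K3 ↔ S = W ∨ (S ∈ H ∧ S ≠ A) := by
            intro S
            rw [hK3def, Finset.mem_insert, Finset.mem_erase]
            tauto
          have hK3hier : IsHierarchy K3 := by
            refine ⟨?_, ?_, ?_, ?_⟩
            · exact (hK3mem _).mpr (Or.inr ⟨hH.1, fun h => hAu' h.symm⟩)
            · intro x
              refine (hK3mem _).mpr (Or.inr ⟨hH.2.1 x, fun h => ?_⟩)
              rw [← h] at hAc'
              simp at hAc'
            · intro S hS
              rcases (hK3mem S).mp hS with rfl | ⟨h1, _⟩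
              · exact (hH.2.2.1 A (hFibmem A hA).1).mono Finset.subset_union_left
              · exact hH.2.2.1 S h1
            · intro S hS T hT
              rcases (hK3mem S).mp hS with rfl | ⟨hS1, hS2⟩
              · rcases (hK3mem T).mp hT with rfl | ⟨hT1, hT2⟩
                · exact Or.inr (Or.inl subset_rfl)
                · rcases hWlam T (Finset.mem_erase.mpr ⟨hT2, hT1⟩) with h | h | h
                  · exact Or.inl (by rwa [Finset.inter_comm] at h)
                  · exact Or.inr (Or.inr h)
                  · exact Or.inr (Or.inl h)
              · rcases (hK3mem T).mp hT with rfl | ⟨hT1, hT2⟩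
                · exact hWlam S (Finset.mem_erase.mpr ⟨hS2, hS1⟩)
                · exact hH.2.2.2 S hS1 T hT1
          have hK3le : LeHP H K3 := by
            refine ⟨fun F => if F = A then W else F, ?_, ?_, ?_, ?_⟩
            · intro F hF
              show (if F = A then W else F) ∈ K3
              by_cases h : F = A
              · rw [if_pos h]
                exact (hK3mem _).mpr (Or.inl rfl)
              · rw [if_neg h]
                exact (hK3mem _).mpr (Or.inr ⟨hF, h⟩)
            · intro x
              show (if ({x} : Finset X) = A then W else {x}) = {x}
              rw [if_neg (fun h => by rw [← h] at hAc'; simp at hAc')]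
            · intro F hF
              show F ⊆ if F = A then W else F
              by_cases h : F = A
              · rw [if_pos h, h]; exact hAW.subset
              · rw [if_neg h]
            · intro S hS T hT hST
              show (if S = A then W else S) ⊂ (if T = A then W else T)
              by_cases h : S = A
              · rw [if_pos h]
                have hST' : A ⊂ T := h ▸ hST
                have hTA : T ≠ A := fun hh => ssubset_irrefl A (hh ▸ hST')
                rw [if_neg hTA]
                exact lt_of_le_of_lt hWD (hparentFib A hA T hT hST')
              · rw [if_neg h]
                by_cases h' : T = A
                · rw [if_pos h']
                  have hST' : S ⊂ A := h' ▸ hST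
                  exact lt_of_lt_of_le hST' hAW.subset
                · rw [if_neg h']
                  exact hST
          have hK3le' : LeHP K3 H' := by
            refine ⟨fun F => if F = W then D else F, ?_, ?_, ?_, ?_⟩
            · intro F hF
              show (if F = W then D else F) ∈ H'
              by_cases h : F = W
              · rw [if_pos h]; exact hDH'
              · rw [if_neg h]
                rcases (hK3mem F).mp hF with rfl | ⟨h1, h2⟩
                · exact absurd rfl h
                · rcases (hHmem F).mp h1 with ⟨g1, _⟩ | g1
                  · exact g1
                  · exact absurd (by rw [hFibA] at g1; simpa using g1) h2
            · intro x
              show (if ({x} : Finset X) = W then D else {x}) = {x}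
              rw [if_neg (fun h => by rw [← h] at hWc; simp at hWc)]
            · intro F hF
              show F ⊆ if F = W then D else F
              by_cases h : F = W
              · rw [if_pos h, h]; exact hWD
              · rw [if_neg h]
            · intro S hS T hT hST
              show (if S = W then D else S) ⊂ (if T = W then D else T)
              by_cases h : S = W
              · rw [if_pos h]
                have hST' : W ⊂ T := h ▸ hST
                have hTW : T ≠ W := fun hh => ssubset_irrefl W (hh ▸ hST')
                rw [if_neg hTW]
                rcases (hK3mem T).mp hT with hTW' | ⟨h1, h2⟩
                · exact absurd hTW' hTW
                · exact hparentFib A hA T h1 (hAW.trans hST')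
              · rw [if_neg h]
                by_cases h' : T = W
                · rw [if_pos h']
                  have hST' : S ⊂ W := h' ▸ hST
                  exact hST'.trans hWssD
                · rw [if_neg h']
                  exact hST
          rcases hmin K3 hK3hier hK3le hK3le' with h | h
          · -- K3 = H impossible : W ∈ K3 \ H
            have : W ∈ H := by rw [← h]; exact (hK3mem _).mpr (Or.inl rfl)
            exact hWH this
          · -- K3 = H' impossible : D ∈ H' \ K3
            have hDK3 : D ∈ K3 := by rw [h]; exact hDH'
            rcases (hK3mem D).mp hDK3 with hh | ⟨hh, _⟩
            · exact hUMD hh.symm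
            · exact hDnotH hh
    · -- K = H' : impossible since D ∉ K
      have : D ∈ K := by rw [hKH']; exact hDH'
      rcases (hKmem D).mp this with ⟨_, h⟩ | h
      · exact h rfl
      · exact hDnotFib h

end Monster
section PathRank
set_option linter.unusedSectionVars false
set_option maxHeartbeats 1000000

variable {X : Type*} [DecidableEq X] [Fintype X]
variable {H H' : Finset (Finset X)}

theorem hasse_rank (h : HasseAdj H H') :
    rankHP H' = rankHP H + 1 ∨ rankHP H = rankHP H' + 1 := by
  obtain ⟨h1, h2, hc | hc⟩ := h
  · exact Or.inl (cover_rank_succ h1 h2 hc)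
  · exact Or.inr (cover_rank_succ h2 h1 hc)

theorem path_rank_bound : ∀ (m : ℕ) (H H' : Finset (Finset X)), HasPathHP H H' m →
    rankHP H ≤ rankHP H' + m ∧ rankHP H' ≤ rankHP H + m ∧
      (m + rankHP H + rankHP H') % 2 = 0 := by
  intro m
  induction m with
  | zero =>
    intro H H' ⟨c, hc0, hcm, _⟩
    rw [← hc0, hcm]
    omega
  | succ m ih =>
    intro H H' ⟨c, hc0, hcm, hce⟩
    have htail : HasPathHP (c 1) H' m :=
      ⟨fun i => c (i + 1), rfl, hcm, fun i hi => hce (i + 1) (by omega)⟩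
    have hedge : HasseAdj H (c 1) := by
      have := hce 0 (by omega)
      rwa [hc0] at this
    obtain ⟨ih1, ih2, ih3⟩ := ih (c 1) H' htail
    rcases hasse_rank hedge with h | h <;> omega

theorem path_down_le : ∀ (m : ℕ) (H H' : Finset (Finset X)), HasPathHP H H' m →
    rankHP H = rankHP H' + m → LeHP H' H := by
  intro m
  induction m with
  | zero =>
    intro H H' ⟨c, hc0, hcm, _⟩ _
    rw [← hc0, hcm]
    exact LeHP.refl _
  | succ m ih =>
    intro H H' ⟨c, hc0, hcm, hce⟩ hr
    have htail : HasPathHP (c 1) H' m :=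
      ⟨fun i => c (i + 1), rfl, hcm, fun i hi => hce (i + 1) (by omega)⟩
    have hedge : HasseAdj H (c 1) := by
      have := hce 0 (by omega)
      rwa [hc0] at this
    obtain ⟨b1, b2, b3⟩ := path_rank_bound m (c 1) H' htail
    have hr1 : rankHP H = rankHP (c 1) + 1 := by
      rcases hasse_rank hedge with h | h <;> omega
    have hcov : CoversHP (c 1) H := by
      rcases hedge.2.2 with h | h
      · exfalso
        have := cover_rank_succ hedge.1 hedge.2.1 h
        omega
      · exact h
    exact (ih (c 1) H' htail (by omega)).trans hcov.1

end PathRank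
section Final
set_option linter.unusedSectionVars false
set_option linter.unusedVariables false
set_option maxHeartbeats 2000000

variable {X : Type*} [DecidableEq X] [Fintype X]

theorem gauss_icc : ∀ m : ℕ, 2 * (∑ k ∈ Finset.Icc 2 m, (k - 1)) = m * (m - 1) := by
  intro m
  induction m with
  | zero => simp
  | succ m ih =>
    rcases Nat.lt_or_ge m 1 with hm | hm
    · interval_cases m
      simp
    · rw [Finset.sum_Icc_succ_top (by omega)]
      have h3 : (m + 1) * m = m * (m - 1) + 2 * m := by
        rcases m with _ | l
        · simp
        · simp only [Nat.add_sub_cancel]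
          ring
      have h4 : (m + 1) * (m + 1 - 1) = (m + 1) * m := by simp
      omega

theorem rank_le_max {H : Finset (Finset X)} (hH : IsHierarchy H) :
    rankHP H ≤ (Fintype.card X - 1) * (Fintype.card X - 2) / 2 := by
  have hb := (laminar_bound (Fintype.card X) (Finset.univ : Finset X)
    (le_of_eq (Finset.card_univ)) (properClusters H)
    (fun A hA => ⟨Finset.subset_univ A, (mem_properClusters.mp hA).2.2⟩)
    (fun A hA B hB => hH.2.2.2 A (properClusters_subset hA) B (properClusters_subset hB))).1
    (fun A hA => (mem_properClusters.mp hA).2.1)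
  rw [Finset.card_univ] at hb
  have he : Fintype.card X - 1 - 1 = Fintype.card X - 2 := by omega
  rw [tri, he] at hb
  exact hb

end Final

section Witness
set_option linter.unusedSectionVars false
set_option linter.unusedVariables false
set_option maxHeartbeats 2000000

variable {X : Type*} [DecidableEq X] [Fintype X]
variable {C T : Finset (Finset X)} {a b : X}

theorem caterpillar_facts (hn : 4 ≤ Fintype.card X) (a : X) (hC : IsCaterpillar C)
    (hCa : Finset.univ.erase a ∈ C) :
    rankHP C = (Fintype.card X - 1) * (Fintype.card X - 2) / 2 ∧
      ∀ S ∈ properClusters C, S ⊆ Finset.univ.erase a := by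
  obtain ⟨hCh, Cf, hcard, hchain, hP⟩ := hC
  set n := Fintype.card X with hn'
  have hinj : ∀ k ∈ Finset.Icc 2 (n - 1), ∀ l ∈ Finset.Icc 2 (n - 1),
      Cf k = Cf l → k = l := by
    intro k hk l hl hkl
    obtain ⟨hk1, hk2⟩ := Finset.mem_Icc.mp hk
    obtain ⟨hl1, hl2⟩ := Finset.mem_Icc.mp hl
    have h1 := hcard k hk1 hk2
    have h2 := hcard l hl1 hl2
    rw [← h1, ← h2, hkl]
  have hrank : rankHP C = (n - 1) * (n - 2) / 2 := by
    have hsum : rankHP C = ∑ k ∈ Finset.Icc 2 (n - 1), ((Cf k).card - 1) := by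
      rw [rankHP, hP, Finset.sum_image hinj]
    have hsum2 : rankHP C = ∑ k ∈ Finset.Icc 2 (n - 1), (k - 1) := by
      rw [hsum]
      refine Finset.sum_congr rfl fun k hk => ?_
      obtain ⟨hk1, hk2⟩ := Finset.mem_Icc.mp hk
      rw [hcard k hk1 hk2]
    have hg := gauss_icc (n - 1)
    have he : n - 1 - 1 = n - 2 := by omega
    rw [he] at hg
    omega
  -- the top cluster is univ.erase a
  have heraseP : Finset.univ.erase a ∈ properClusters C := by
    refine mem_properClusters.mpr ⟨hCa, ?_, ?_⟩
    · intro h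
      have := Finset.mem_univ a
      rw [← h] at this
      exact absurd this (Finset.notMem_erase a _)
    · rw [Finset.card_erase_of_mem (Finset.mem_univ a), Finset.card_univ]
      omega
  have htop : Cf (n - 1) = Finset.univ.erase a := by
    rw [hP] at heraseP
    obtain ⟨k, hk, hke⟩ := Finset.mem_image.mp heraseP
    obtain ⟨hk1, hk2⟩ := Finset.mem_Icc.mp hk
    have h1 := hcard k hk1 hk2
    rw [hke, Finset.card_erase_of_mem (Finset.mem_univ a), Finset.card_univ] at h1
    have : k = n - 1 := by omega
    rw [← this, hke]
  refine ⟨hrank, ?_⟩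
  intro S hS
  rw [hP] at hS
  obtain ⟨k, hk, rfl⟩ := Finset.mem_image.mp hS
  obtain ⟨hk1, hk2⟩ := Finset.mem_Icc.mp hk
  rcases Nat.lt_or_ge k (n - 1) with h | h
  · rw [← htop]
    exact (hchain k (n - 1) hk1 h (le_refl _)).subset
  · have : k = n - 1 := by omega
    rw [← htop, this]

theorem not_le_T_C (hn : 4 ≤ Fintype.card X) {a b : X} (hab : a ≠ b)
    (hC : IsCaterpillar C) (hCa : Finset.univ.erase a ∈ C)
    (hT : IsHierarchy T) (hTP : properClusters T = {({a, b} : Finset X)}) :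
    ¬ LeHP T C := by
  rintro ⟨δ, hm⟩
  have habP : ({a, b} : Finset X) ∈ properClusters T := by
    rw [hTP]; exact Finset.mem_singleton_self _
  have habT : ({a, b} : Finset X) ∈ T := properClusters_subset habP
  have habc : ({a, b} : Finset X).card = 2 := Finset.card_pair hab
  have hss : ({a, b} : Finset X) ⊂ Finset.univ := by
    refine Finset.ssubset_univ_iff.mpr (fun h => ?_)
    rw [h, Finset.card_univ] at habc
    omega
  have hd := hm.1 _ habT
  have hmono := hm.2.2.2 _ habT Finset.univ hT.1 hss
  rw [hpmap_univ hm hT.1] at hmono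
  have hsubd : ({a, b} : Finset X) ⊆ δ {a, b} := hm.2.2.1 _ habT
  have hdP : δ {a, b} ∈ properClusters C := by
    refine mem_properClusters.mpr ⟨hd, Finset.ssubset_univ_iff.mp hmono, ?_⟩
    have := Finset.card_le_card hsubd
    omega
  have hsub := (caterpillar_facts hn a hC hCa).2 _ hdP
  have hamem : a ∈ δ {a, b} := hsubd (by simp)
  exact absurd (hsub hamem) (by simp)

theorem rank_T (hab : a ≠ b) (hTP : properClusters T = {({a, b} : Finset X)}) :
    rankHP T = 1 := by
  rw [rankHP, hTP, Finset.sum_singleton, Finset.card_pair hab]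

theorem star_le_T (hn : 4 ≤ Fintype.card X) (hab : a ≠ b) (hT : IsHierarchy T)
    (hTP : properClusters T = {({a, b} : Finset X)}) :
    HasseAdj (starH X) T := by
  have : Nonempty X := Fintype.card_pos_iff.mp (by omega)
  refine hasse_of_rank_succ starH_hier hT (LeHP.of_subset ?_) ?_
  · intro S hS
    rcases mem_starH.mp hS with rfl | ⟨x, rfl⟩
    · exact hT.1
    · exact hT.2.1 x
  · rw [rank_T hab hTP, rankHP_starH]

end Witness
/-- the diameter `Δ` of `RP(X)` under `d_HP` satisfies
`(n-1)(n-2)/2 + 1 ≤ Δ ≤ (n-1)(n-2)`; the lower bound is witnessed by a caterpillar `C`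
with inclusion-maximal proper cluster `X \ {a}` and a tree `T` whose only proper cluster
is `{a, b}`. -/
theorem diameter_bounds (hn : 4 ≤ Fintype.card X) (a b : X) (hab : a ≠ b)
    (C T : Finset (Finset X)) (hC : IsCaterpillar C) (hCa : Finset.univ.erase a ∈ C)
    (hT : IsHierarchy T) (hTP : properClusters T = {({a, b} : Finset X)}) :
    DistHP C T ((Fintype.card X - 1) * (Fintype.card X - 2) / 2 + 1) ∧
    ∀ T₁ T₂ : Finset (Finset X), IsHierarchy T₁ → IsHierarchy T₂ →
      ∀ d : ℕ, DistHP T₁ T₂ d → d ≤ (Fintype.card X - 1) * (Fintype.card X - 2) := by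
  have hnty : Nonempty X := Fintype.card_pos_iff.mp (by omega)
  obtain ⟨hrkC, hsubC⟩ := caterpillar_facts hn a hC hCa
  have hrkT : rankHP T = 1 := rank_T hab hTP
  have hR2 : 2 * ((Fintype.card X - 1) * (Fintype.card X - 2) / 2) =
      (Fintype.card X - 1) * (Fintype.card X - 2) := by
    have h2t := two_tri (Fintype.card X - 1)
    have he : Fintype.card X - 1 - 1 = Fintype.card X - 2 := by omega
    rw [tri, he] at h2t
    exact h2t
  have h6 : 6 ≤ (Fintype.card X - 1) * (Fintype.card X - 2) := by
    have := Nat.mul_le_mul (show 3 ≤ Fintype.card X - 1 by omega)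
      (show 2 ≤ Fintype.card X - 2 by omega)
    omega
  constructor
  · refine ⟨?_, ?_⟩
    · -- a path of length R + 1 via the star tree
      have p3 : HasPathHP C T (rankHP C + rankHP T) :=
        hasPath_concat (path_to_star C hC.1) (hasPath_symm (path_to_star T hT))
      rw [hrkC, hrkT] at p3
      exact p3
    · intro m hm
      obtain ⟨b1, b2, b3⟩ := path_rank_bound m C T hm
      rw [hrkC, hrkT] at b1 b2 b3
      by_contra hcon
      push_neg at hcon
      have hmR : m = (Fintype.card X - 1) * (Fintype.card X - 2) / 2 - 1 ∨
          m = (Fintype.card X - 1) * (Fintype.card X - 2) / 2 := by omega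
      rcases hmR with rfl | rfl
      · exact not_le_T_C hn hab hC hCa hT hTP
          (path_down_le _ C T hm (by rw [hrkC, hrkT]; omega))
      · omega
  · intro T₁ T₂ h₁ h₂ d hd
    have q3 : HasPathHP T₁ T₂ (rankHP T₁ + rankHP T₂) :=
      hasPath_concat (path_to_star T₁ h₁) (hasPath_symm (path_to_star T₂ h₂))
    have hle := hd.2 _ q3
    have r1 := rank_le_max h₁
    have r2 := rank_le_max h₂
    omega
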